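/- arXiv:1308.2237 — 6 statements merged into one kernel-verified Lean document; each statement's English description precedes it below -/
import Mathlib

section
/- For 1 ≤ j < k ≤ n, the double product over pairs 1 ≤ j < k ≤ n of (1-q^{1+k-j})/(1-q^{k-j}) equals the single product over 1 ≤ j ≤ n of (1-q^j)/(1-q). -/
theorem double_product_poincare (q : ℝ) (hq : 0 < q) (hq1 : q < 1) (n : ℕ) :
    (∏ j : Fin n, ∏ k : Fin n,
        if j < k then (1 - q ^ (1 + (k : ℕ) - (j : ℕ))) / (1 - q ^ ((k : ℕ) - (j : ℕ))) else 1)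
      = ∏ j ∈ Finset.range n, (1 - q ^ (j + 1)) / (1 - q) := by
  set f : ℕ → ℕ → ℝ := fun j k =>
    if j < k then (1 - q ^ (1 + k - j)) / (1 - q ^ (k - j)) else 1 with hf
  have hne : ∀ m : ℕ, (1 : ℝ) - q ^ (m + 1) ≠ 0 := by
    intro m
    have : q ^ (m + 1) < 1 := pow_lt_one₀ hq.le hq1 (Nat.succ_ne_zero m)
    linarith
  have hB : ∀ m : ℕ, ∏ i ∈ Finset.range m, (1 - q ^ (i + 2)) / (1 - q ^ (i + 1))
      = (1 - q ^ (m + 1)) / (1 - q) := by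
    intro m
    induction m with
    | zero => simpa using (div_self (by simpa using hne 0)).symm
    | succ m ih =>
      rw [Finset.prod_range_succ, ih, div_mul_div_comm, mul_comm (1 - q ^ (m + 1)) (1 - q ^ (m + 2)),
        mul_div_mul_right _ _ (hne m)]
  have hA : ∀ m : ℕ, ∏ j ∈ Finset.range m, (1 - q ^ (1 + m - j)) / (1 - q ^ (m - j))
      = (1 - q ^ (m + 1)) / (1 - q) := by
    intro m
    rw [← hB m, ← Finset.prod_range_reflect]
    apply Finset.prod_congr rfl
    intro i hi
    rw [Finset.mem_range] at hi
    have e1 : 1 + m - (m - 1 - i) = i + 2 := by omega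
    have e2 : m - (m - 1 - i) = i + 1 := by omega
    rw [e1, e2]
  have key : ∀ N : ℕ, ∏ j ∈ Finset.range N, ∏ k ∈ Finset.range N, f j k
      = ∏ j ∈ Finset.range N, (1 - q ^ (j + 1)) / (1 - q) := by
    intro N
    induction N with
    | zero => simp
    | succ N ih =>
      have inner : ∀ j, ∏ k ∈ Finset.range (N + 1), f j k
          = (∏ k ∈ Finset.range N, f j k) * f j N := fun j => Finset.prod_range_succ _ _
      calc ∏ j ∈ Finset.range (N + 1), ∏ k ∈ Finset.range (N + 1), f j k
          = ∏ j ∈ Finset.range (N + 1), ((∏ k ∈ Finset.range N, f j k) * f j N) :=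
            Finset.prod_congr rfl (fun j _ => inner j)
        _ = (∏ j ∈ Finset.range (N + 1), ∏ k ∈ Finset.range N, f j k)
            * ∏ j ∈ Finset.range (N + 1), f j N := Finset.prod_mul_distrib
        _ = ((∏ j ∈ Finset.range N, ∏ k ∈ Finset.range N, f j k) * ∏ k ∈ Finset.range N, f N k)
            * ((∏ j ∈ Finset.range N, f j N) * f N N) := by
              rw [Finset.prod_range_succ, Finset.prod_range_succ]
        _ = (∏ j ∈ Finset.range N, (1 - q ^ (j + 1)) / (1 - q)) * ((1 - q ^ (N + 1)) / (1 - q)) := by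
              have h1 : ∏ k ∈ Finset.range N, f N k = 1 := by
                apply Finset.prod_eq_one
                intro k hk
                rw [Finset.mem_range] at hk
                simp [hf, Nat.not_lt.mpr hk.le]
              have h2 : f N N = 1 := by simp [hf]
              have h3 : ∏ j ∈ Finset.range N, f j N
                  = ∏ j ∈ Finset.range N, (1 - q ^ (1 + N - j)) / (1 - q ^ (N - j)) := by
                apply Finset.prod_congr rfl
                intro j hj
                rw [Finset.mem_range] at hj
                simp [hf, hj]
              rw [h1, h2, h3, hA, ih, mul_one, mul_one]
        _ = ∏ j ∈ Finset.range (N + 1), (1 - q ^ (j + 1)) / (1 - q) :=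
              (Finset.prod_range_succ _ _).symm
  have conv1 : ∀ j : Fin n, (∏ k : Fin n,
      if j < k then (1 - q ^ (1 + (k : ℕ) - (j : ℕ))) / (1 - q ^ ((k : ℕ) - (j : ℕ))) else 1)
      = ∏ k ∈ Finset.range n, f (j : ℕ) k := by
    intro j
    rw [← Fin.prod_univ_eq_prod_range (fun k => f (j : ℕ) k) n]
    apply Finset.prod_congr rfl
    intro k _
    simp only [hf, Fin.lt_def]
  calc (∏ j : Fin n, ∏ k : Fin n,
        if j < k then (1 - q ^ (1 + (k : ℕ) - (j : ℕ))) / (1 - q ^ ((k : ℕ) - (j : ℕ))) else 1)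
      = ∏ j : Fin n, ∏ k ∈ Finset.range n, f (j : ℕ) k :=
        Finset.prod_congr rfl (fun j _ => conv1 j)
    _ = ∏ j ∈ Finset.range n, ∏ k ∈ Finset.range n, f j k :=
        Fin.prod_univ_eq_prod_range (fun j => ∏ k ∈ Finset.range n, f j k) n
    _ = _ := key n
end

section
/- Let λ ∈ Z^n be weakly decreasing, let J ⊆ {1,...,n} be such that λ + e_J is still weakly decreasing, where e_J := Σ_{j∈J} e_j. Define V_{λ,J} := Π (1-q^{k-j+1})/(1-q^{k-j}), the product over pairs 1 ≤ j < k ≤ n with j ∈ J, k ∉ J, λ_j = λ_k. Then V_{λ,J} = Π_{l∈Z} [m_l(λ)]! / ([m_{l,J}(λ)]! [m_{l,J^c}(λ)]!), i.e. V_{λ,J} is a product of q-binomial coefficients: V_{λ,J} = Π_{l∈Z} qbinom(m_l(λ), m_{l,J}(λ)). -/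
noncomputable def qint (q : ℝ) (m : ℕ) : ℝ := (1 - q ^ m) / (1 - q)

noncomputable def qfact (q : ℝ) (m : ℕ) : ℝ := ∏ i ∈ Finset.range m, qint q (i + 1)

noncomputable def qbinom (q : ℝ) (m k : ℕ) : ℝ := qfact q m / (qfact q k * qfact q (m - k))

def mult {n : ℕ} (lam : Fin n → ℤ) (l : ℤ) : ℕ :=
  (Finset.univ.filter fun j => lam j = l).card

/-- Multiplicity of `l` among the components of `lam` with index in `J`. -/
def multIn {n : ℕ} (lam : Fin n → ℤ) (J : Finset (Fin n)) (l : ℤ) : ℕ :=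
  (J.filter fun j => lam j = l).card

/-- `V_{λ,J}`: product over pairs `j < k` with `j ∈ J`, `k ∉ J`, `λ_j = λ_k`. -/
noncomputable def Vcoef {n : ℕ} (q : ℝ) (lam : Fin n → ℤ) (J : Finset (Fin n)) : ℝ :=
  ∏ j : Fin n, ∏ k : Fin n,
    if j < k ∧ j ∈ J ∧ k ∉ J ∧ lam j = lam k then
      (1 - q ^ ((k : ℕ) - (j : ℕ) + 1)) / (1 - q ^ ((k : ℕ) - (j : ℕ))) else 1

lemma one_sub_pow_ne {q : ℝ} (hq : 0 < q) (hq1 : q < 1) {e : ℕ} (he : e ≠ 0) :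
    1 - q ^ e ≠ 0 := by
  have : q ^ e < 1 := pow_lt_one₀ hq.le hq1 he
  linarith

lemma telescopeAux (A : ℕ → ℝ) (hA : ∀ t, A t ≠ 0) (m : ℕ) :
    ∏ t ∈ Finset.range m, A (t + 1) / A t = A m / A 0 := by
  induction m with
  | zero => simp [div_self (hA 0)]
  | succ m ih =>
      rw [Finset.prod_range_succ, ih, div_mul_div_comm, mul_comm (A 0) (A m)]
      exact mul_div_mul_left _ _ (hA m)

noncomputable def Epoly (q : ℝ) (k : ℕ) : ℝ := ∏ i ∈ Finset.range k, (1 - q ^ (i + 1))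

lemma Epoly_ne {q : ℝ} (hq : 0 < q) (hq1 : q < 1) (k : ℕ) : Epoly q k ≠ 0 :=
  Finset.prod_ne_zero_iff.mpr fun i _ => one_sub_pow_ne hq hq1 i.succ_ne_zero

lemma qfact_eq (q : ℝ) (m : ℕ) : qfact q m = Epoly q m / (1 - q) ^ m := by
  unfold qfact qint Epoly
  rw [Finset.prod_div_distrib, Finset.prod_const, Finset.card_range]

lemma keyProd (q : ℝ) (hq : 0 < q) (hq1 : q < 1) (s t : ℕ) :
    ∏ i ∈ Finset.range s, ∏ u ∈ Finset.range t,
      (1 - q ^ (s + u - i + 1)) / (1 - q ^ (s + u - i))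
      = qfact q (s + t) / (qfact q s * qfact q t) := by
  have hq1' : (1 : ℝ) - q ≠ 0 := by linarith
  have hstep : ∀ i ∈ Finset.range s,
      (∏ u ∈ Finset.range t, (1 - q ^ (s + u - i + 1)) / (1 - q ^ (s + u - i)))
        = (1 - q ^ (s - i + t)) / (1 - q ^ (s - i)) := by
    intro i hi
    have his : i < s := Finset.mem_range.mp hi
    have ht := telescopeAux (fun u => 1 - q ^ (s - i + u))
      (fun u => one_sub_pow_ne hq hq1 (by omega)) t
    simp only [add_zero] at ht
    rw [← ht]
    apply Finset.prod_congr rfl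
    intro u _
    rw [show s + u - i + 1 = s - i + (u + 1) from by omega,
      show s + u - i = s - i + u from by omega]
  rw [Finset.prod_congr rfl hstep, Finset.prod_div_distrib]
  have hD : (∏ i ∈ Finset.range s, (1 - q ^ (s - i))) = Epoly q s := by
    rw [Epoly, ← Finset.prod_range_reflect]
    apply Finset.prod_congr rfl
    intro i hi
    have : i < s := Finset.mem_range.mp hi
    rw [show s - (s - 1 - i) = i + 1 from by omega]
  have hN : (∏ i ∈ Finset.range s, (1 - q ^ (s - i + t)))
      = ∏ i ∈ Finset.range s, (1 - q ^ (t + i + 1)) := by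
    rw [← Finset.prod_range_reflect]
    apply Finset.prod_congr rfl
    intro i hi
    have : i < s := Finset.mem_range.mp hi
    rw [show s - (s - 1 - i) + t = t + i + 1 from by omega]
  have hkey : Epoly q t * (∏ i ∈ Finset.range s, (1 - q ^ (t + i + 1))) = Epoly q (s + t) := by
    rw [show s + t = t + s from by omega, Epoly, Epoly, Finset.prod_range_add]
  rw [hD, hN, qfact_eq, qfact_eq, qfact_eq, ← hkey]
  have hEs := Epoly_ne hq hq1 s
  have hEt := Epoly_ne hq hq1 t
  have hP : (∏ i ∈ Finset.range s, (1 - q ^ (t + i + 1))) ≠ 0 :=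
    Finset.prod_ne_zero_iff.mpr fun i _ => one_sub_pow_ne hq hq1 (by omega)
  have hpow : ((1:ℝ) - q) ^ s ≠ 0 := pow_ne_zero _ hq1'
  have hpow2 : ((1:ℝ) - q) ^ t ≠ 0 := pow_ne_zero _ hq1'
  rw [pow_add]
  field_simp

lemma val_lt_card_iff {n : ℕ} {h : Fin n → ℤ} (hh : Antitone h) (t : ℤ) (j : Fin n) :
    (j : ℕ) < (Finset.univ.filter fun i => t ≤ h i).card ↔ t ≤ h j := by
  constructor
  · intro hlt
    by_contra hc
    push_neg at hc
    have hsub : (Finset.univ.filter fun i => t ≤ h i) ⊆ Finset.Iio j := by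
      intro i hi
      simp only [Finset.mem_filter, Finset.mem_univ, true_and] at hi
      rw [Finset.mem_Iio]
      by_contra hij
      push_neg at hij
      exact absurd (le_trans hi (hh hij)) (not_le.mpr hc)
    have := Finset.card_le_card hsub
    rw [Fin.card_Iio] at this
    omega
  · intro ht
    have hsub : Finset.Iic j ⊆ (Finset.univ.filter fun i => t ≤ h i) := by
      intro i hi
      simp only [Finset.mem_filter, Finset.mem_univ, true_and]
      exact le_trans ht (hh (Finset.mem_Iic.mp hi))
    have := Finset.card_le_card hsub
    rw [Fin.card_Iic] at this
    omega

lemma prod_filter_val {n x y : ℕ} (hy : y ≤ n) (F : ℕ → ℝ) :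
    ∏ j ∈ Finset.univ.filter (fun j : Fin n => x ≤ (j : ℕ) ∧ (j : ℕ) < y), F (j : ℕ)
      = ∏ m ∈ Finset.Ico x y, F m := by
  refine Finset.prod_nbij (i := fun j : Fin n => (j : ℕ)) ?_ ?_ ?_ ?_
  · intro j hj
    simp only [Finset.mem_filter, Finset.mem_univ, true_and] at hj
    exact Finset.mem_Ico.mpr hj
  · intro a _ b _ hab
    exact Fin.val_injective hab
  · intro m hm
    simp only [Finset.mem_coe, Finset.mem_Ico] at hm
    refine ⟨⟨m, lt_of_lt_of_le hm.2 hy⟩, ?_, rfl⟩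
    simp [hm.1, hm.2]
  · intro a _
    rfl

lemma card_filter_val {n x y : ℕ} (hy : y ≤ n) :
    (Finset.univ.filter (fun j : Fin n => x ≤ (j : ℕ) ∧ (j : ℕ) < y)).card = y - x := by
  rw [← Nat.card_Ico, ← Finset.card_image_of_injective _ Fin.val_injective]
  congr 1
  ext m
  simp only [Finset.mem_image, Finset.mem_filter, Finset.mem_univ, true_and, Finset.mem_Ico]
  constructor
  · rintro ⟨j, hj, rfl⟩; exact hj
  · rintro ⟨h1, h2⟩; exact ⟨⟨m, lt_of_lt_of_le h2 hy⟩, ⟨h1, h2⟩, rfl⟩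

theorem Vcoef_eq_qbinom_product (q : ℝ) (hq : 0 < q) (hq1 : q < 1) (n : ℕ)
    (lam : Fin n → ℤ) (hlam : Antitone lam) (J : Finset (Fin n))
    (hJ : Antitone fun j => lam j + if j ∈ J then 1 else 0) :
    Vcoef q lam J
        = ∏ l ∈ Finset.univ.image lam,
            qfact q (mult lam l) / (qfact q (multIn lam J l) * qfact q (multIn lam Jᶜ l)) ∧
    Vcoef q lam J = ∏ l ∈ Finset.univ.image lam, qbinom q (mult lam l) (multIn lam J l) := by
  set g : Fin n → ℤ := fun j => lam j + if j ∈ J then 1 else 0 with hgdef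
  have hganti : Antitone g := hJ
  -- basic fact: if j ∈ J, k ∉ J, lam j = lam k then j < k
  have hjk : ∀ j k : Fin n, j ∈ J → k ∉ J → lam j = lam k → j < k := by
    intro j k hjJ hkJ hlk
    by_contra hle
    push_neg at hle
    rcases lt_or_eq_of_le hle with hlt | heq
    · have hg1 := hganti hle
      simp only [hgdef, hjJ, hkJ, if_pos, if_neg, not_false_iff] at hg1
      omega
    · rw [heq] at hkJ; exact hkJ hjJ
  -- per-value computation
  have perl : ∀ l : ℤ,
      multIn lam J l + multIn lam Jᶜ l = mult lam l ∧
      (∏ j ∈ J.filter (fun j => lam j = l), ∏ k ∈ Jᶜ.filter (fun k => lam k = l),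
        (1 - q ^ ((k : ℕ) - (j : ℕ) + 1)) / (1 - q ^ ((k : ℕ) - (j : ℕ))))
        = qfact q (mult lam l) / (qfact q (multIn lam J l) * qfact q (multIn lam Jᶜ l)) := by
    intro l
    set a := (Finset.univ.filter fun i => l + 1 ≤ lam i).card with ha
    set b := (Finset.univ.filter fun i => l + 1 ≤ g i).card with hb
    set c := (Finset.univ.filter fun i => l ≤ lam i).card with hc
    have hA : ∀ j : Fin n, (j : ℕ) < a ↔ l + 1 ≤ lam j := fun j => val_lt_card_iff hlam _ j
    have hB : ∀ j : Fin n, (j : ℕ) < b ↔ l + 1 ≤ g j := fun j => val_lt_card_iff hganti _ j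
    have hC : ∀ j : Fin n, (j : ℕ) < c ↔ l ≤ lam j := fun j => val_lt_card_iff hlam _ j
    have hgbound : ∀ j : Fin n, lam j ≤ g j ∧ g j ≤ lam j + 1 := by
      intro j
      by_cases h : j ∈ J <;> simp [hgdef, h]
    have hcn : c ≤ n := le_trans (Finset.card_filter_le _ _) (by simp)
    have hbn : b ≤ n := le_trans (Finset.card_filter_le _ _) (by simp)
    have han : a ≤ n := le_trans (Finset.card_filter_le _ _) (by simp)
    have hab : a ≤ b := by
      by_contra hcon
      push_neg at hcon
      have hblt : b < n := lt_of_lt_of_le hcon han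
      set j : Fin n := ⟨b, hblt⟩
      have h1 : l + 1 ≤ lam j := (hA j).mp hcon
      have h2 : l + 1 ≤ g j := le_trans h1 (hgbound j).1
      have := (hB j).mpr h2
      simp [j] at this
    have hbc : b ≤ c := by
      by_contra hcon
      push_neg at hcon
      have hclt : c < n := lt_of_lt_of_le hcon hbn
      set j : Fin n := ⟨c, hclt⟩
      have h1 : l + 1 ≤ g j := (hB j).mp hcon
      have h2 : l ≤ lam j := by have := (hgbound j).2; omega
      have := (hC j).mpr h2
      simp [j] at this
    have hS : ∀ j : Fin n, (j ∈ J ∧ lam j = l) ↔ (a ≤ (j : ℕ) ∧ (j : ℕ) < b) := by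
      intro j
      constructor
      · rintro ⟨hjJ, hl⟩
        constructor
        · by_contra h
          push_neg at h
          have := (hA j).mp h
          omega
        · apply (hB j).mpr
          simp [hgdef, hjJ, hl]
      · rintro ⟨h1, h2⟩
        have hgj : l + 1 ≤ g j := (hB j).mp h2
        have hlamle : ¬ (l + 1 ≤ lam j) := fun h => by have := (hA j).mpr h; omega
        push_neg at hlamle
        by_cases hj : j ∈ J
        · refine ⟨hj, ?_⟩
          simp only [hgdef, hj, if_pos] at hgj
          omega
        · exfalso
          simp only [hgdef, hj, if_neg, not_false_iff] at hgj
          omega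
    have hT : ∀ j : Fin n, (j ∉ J ∧ lam j = l) ↔ (b ≤ (j : ℕ) ∧ (j : ℕ) < c) := by
      intro j
      constructor
      · rintro ⟨hjJ, hl⟩
        constructor
        · by_contra h
          push_neg at h
          have := (hB j).mp h
          simp only [hgdef, hjJ, if_neg, not_false_iff] at this
          omega
        · exact (hC j).mpr (le_of_eq hl.symm)
      · rintro ⟨h1, h2⟩
        have hlamge : l ≤ lam j := (hC j).mp h2
        have hgj : ¬ (l + 1 ≤ g j) := fun h => by have := (hB j).mpr h; omega
        push_neg at hgj
        have hle := (hgbound j).1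
        have hlameq : lam j = l := by omega
        refine ⟨?_, hlameq⟩
        intro hj
        simp only [hgdef, hj, if_pos] at hgj
        omega
    have hSset : J.filter (fun j => lam j = l)
        = Finset.univ.filter (fun j : Fin n => a ≤ (j : ℕ) ∧ (j : ℕ) < b) := by
      ext j
      simp only [Finset.mem_filter, Finset.mem_univ, true_and]
      exact hS j
    have hTset : Jᶜ.filter (fun k => lam k = l)
        = Finset.univ.filter (fun j : Fin n => b ≤ (j : ℕ) ∧ (j : ℕ) < c) := by
      ext j
      simp only [Finset.mem_filter, Finset.mem_univ, true_and, Finset.mem_compl]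
      exact hT j
    have hmultJ : multIn lam J l = b - a := by
      rw [multIn, hSset, card_filter_val hbn]
    have hmultJc : multIn lam Jᶜ l = c - b := by
      rw [multIn, hTset, card_filter_val hcn]
    have hmult : mult lam l = c - a := by
      have : Finset.univ.filter (fun j : Fin n => lam j = l)
          = Finset.univ.filter (fun j : Fin n => a ≤ (j : ℕ) ∧ (j : ℕ) < c) := by
        ext j
        simp only [Finset.mem_filter, Finset.mem_univ, true_and]
        constructor
        · intro hl
          constructor
          · by_contra h
            push_neg at h
            have := (hA j).mp h
            omega
          · exact (hC j).mpr (le_of_eq hl.symm)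
        · rintro ⟨h1, h2⟩
          have h3 : l ≤ lam j := (hC j).mp h2
          have h4 : ¬ (l + 1 ≤ lam j) := fun h => by have := (hA j).mpr h; omega
          omega
      rw [mult, this, card_filter_val hcn]
    refine ⟨by omega, ?_⟩
    rw [hSset, hTset, hmultJ, hmultJc, hmult]
    rw [prod_filter_val hbn (fun x => ∏ k ∈ Finset.univ.filter
        (fun j : Fin n => b ≤ (j : ℕ) ∧ (j : ℕ) < c),
        (1 - q ^ ((k : ℕ) - x + 1)) / (1 - q ^ ((k : ℕ) - x)))]
    rw [Finset.prod_congr rfl (fun m _ => prod_filter_val hcn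
        (fun y => (1 - q ^ (y - m + 1)) / (1 - q ^ (y - m))))]
    rw [Finset.prod_Ico_eq_prod_range]
    have hconv : ∀ i ∈ Finset.range (b - a),
        (∏ y ∈ Finset.Ico b c, (1 - q ^ (y - (a + i) + 1)) / (1 - q ^ (y - (a + i))))
          = ∏ u ∈ Finset.range (c - b),
              (1 - q ^ ((b - a) + u - i + 1)) / (1 - q ^ ((b - a) + u - i)) := by
      intro i hi
      have hi' : i < b - a := Finset.mem_range.mp hi
      rw [Finset.prod_Ico_eq_prod_range]
      apply Finset.prod_congr rfl
      intro u _
      rw [show b + u - (a + i) + 1 = (b - a) + u - i + 1 from by omega,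
        show b + u - (a + i) = (b - a) + u - i from by omega]
    rw [Finset.prod_congr rfl hconv, keyProd q hq hq1 (b - a) (c - b)]
    rw [show (b - a) + (c - b) = c - a from by omega]
  -- reduce Vcoef to the fiberwise double product
  have hmain : Vcoef q lam J = ∏ l ∈ Finset.univ.image lam,
      ∏ j ∈ J.filter (fun j => lam j = l), ∏ k ∈ Jᶜ.filter (fun k => lam k = l),
        (1 - q ^ ((k : ℕ) - (j : ℕ) + 1)) / (1 - q ^ ((k : ℕ) - (j : ℕ))) := by
    rw [Vcoef]
    have step1 : ∀ j : Fin n,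
        (∏ k : Fin n, if j < k ∧ j ∈ J ∧ k ∉ J ∧ lam j = lam k then
            (1 - q ^ ((k : ℕ) - (j : ℕ) + 1)) / (1 - q ^ ((k : ℕ) - (j : ℕ))) else 1)
          = if j ∈ J then (∏ k ∈ Jᶜ.filter (fun k => lam k = lam j),
              (1 - q ^ ((k : ℕ) - (j : ℕ) + 1)) / (1 - q ^ ((k : ℕ) - (j : ℕ)))) else 1 := by
      intro j
      by_cases hj : j ∈ J
      · rw [if_pos hj]
        have hiff : ∀ k : Fin n,
            (j < k ∧ j ∈ J ∧ k ∉ J ∧ lam j = lam k) ↔ (k ∈ Jᶜ ∧ lam k = lam j) := by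
          intro k
          constructor
          · rintro ⟨_, _, hk, he⟩
            exact ⟨Finset.mem_compl.mpr hk, he.symm⟩
          · rintro ⟨hk, he⟩
            have hk' : k ∉ J := Finset.mem_compl.mp hk
            exact ⟨hjk j k hj hk' he.symm, hj, hk', he.symm⟩
        calc (∏ k : Fin n, if j < k ∧ j ∈ J ∧ k ∉ J ∧ lam j = lam k then
                (1 - q ^ ((k : ℕ) - (j : ℕ) + 1)) / (1 - q ^ ((k : ℕ) - (j : ℕ))) else 1)
            = ∏ k : Fin n, if k ∈ Jᶜ ∧ lam k = lam j then
                (1 - q ^ ((k : ℕ) - (j : ℕ) + 1)) / (1 - q ^ ((k : ℕ) - (j : ℕ))) else 1 :=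
              Finset.prod_congr rfl fun k _ => if_congr (hiff k) rfl rfl
          _ = ∏ k ∈ Finset.univ.filter (fun k : Fin n => k ∈ Jᶜ ∧ lam k = lam j),
                (1 - q ^ ((k : ℕ) - (j : ℕ) + 1)) / (1 - q ^ ((k : ℕ) - (j : ℕ))) :=
              (Finset.prod_filter _ _).symm
          _ = ∏ k ∈ Jᶜ.filter (fun k => lam k = lam j),
                (1 - q ^ ((k : ℕ) - (j : ℕ) + 1)) / (1 - q ^ ((k : ℕ) - (j : ℕ))) := by
              apply Finset.prod_congr _ (fun _ _ => rfl)
              ext k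
              simp [Finset.mem_filter]
      · rw [if_neg hj]
        apply Finset.prod_eq_one
        intro k _
        rw [if_neg]
        rintro ⟨_, hjJ, _, _⟩
        exact hj hjJ
    rw [Finset.prod_congr rfl fun j _ => step1 j]
    rw [Finset.prod_ite_mem Finset.univ J
      (fun j => ∏ k ∈ Jᶜ.filter (fun k => lam k = lam j),
        (1 - q ^ ((k : ℕ) - (j : ℕ) + 1)) / (1 - q ^ ((k : ℕ) - (j : ℕ)))),
      Finset.univ_inter]
    rw [← Finset.prod_fiberwise_of_maps_to (g := lam) (t := Finset.univ.image lam)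
      (fun j _ => Finset.mem_image_of_mem lam (Finset.mem_univ j))]
    apply Finset.prod_congr rfl
    intro l _
    apply Finset.prod_congr rfl
    intro j hjmem
    have : lam j = l := (Finset.mem_filter.mp hjmem).2
    rw [this]
  constructor
  · rw [hmain]
    exact Finset.prod_congr rfl fun l _ => (perl l).2
  · rw [hmain]
    apply Finset.prod_congr rfl
    intro l _
    rw [(perl l).2, qbinom]
    have h1 : multIn lam J l + multIn lam Jᶜ l = mult lam l := (perl l).1
    rw [show mult lam l - multIn lam J l = multIn lam Jᶜ l from by omega]
end

section
/- The hopping operators a_l := β_{l+1}^* β_l satisfy nonlocal commutativity a_l a_k = a_k a_l for |l - k| > 1, and the quantum Knuth relations a_{l+1} a_l^2 + q a_l^2 a_{l+1} = (1+q) a_l a_{l+1} a_l and a_{l+1}^2 a_l + q a_l a_{l+1}^2 = (1+q) a_{l+1} a_l a_{l+1}. -/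
def ann (l : ℤ) (f : Multiset ℤ → ℂ) : Multiset ℤ → ℂ := fun μ => f (l ::ₘ μ)

noncomputable def cre (q : ℝ) (l : ℤ) (f : Multiset ℤ → ℂ) : Multiset ℤ → ℂ :=
  fun μ => if 0 < μ.count l then (qint q (μ.count l) : ℂ) * f (μ.erase l) else 0

/-- Hopping operator `a_l := β_{l+1}^* β_l`. -/
noncomputable def hop (q : ℝ) (l : ℤ) (f : Multiset ℤ → ℂ) : Multiset ℤ → ℂ :=
  cre q (l + 1) (ann l f)

lemma count_erase' (a b : ℤ) (s : Multiset ℤ) :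
    (s.erase b).count a = s.count a - if a = b then 1 else 0 := by
  split_ifs with h
  · subst h; simp [Multiset.count_erase_self]
  · simp [Multiset.count_erase_of_ne h]

lemma qint_zero (q : ℝ) : qint q 0 = 0 := by simp [qint]

lemma qint_rec (q : ℝ) (hq1 : q ≠ 1) (k : ℕ) :
    qint q (k + 2) + q * qint q k = (1 + q) * qint q (k + 1) := by
  have h : (1 : ℝ) - q ≠ 0 := sub_ne_zero.mpr (Ne.symm hq1)
  unfold qint
  field_simp
  ring

theorem plactic_relations (q : ℝ) (hq : 0 < q) (hq1 : q < 1) :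
    (∀ (l k : ℤ), 1 < |l - k| → ∀ (f : Multiset ℤ → ℂ) (μ : Multiset ℤ),
        hop q l (hop q k f) μ = hop q k (hop q l f) μ) ∧
    (∀ (l : ℤ) (f : Multiset ℤ → ℂ) (μ : Multiset ℤ),
        hop q (l + 1) (hop q l (hop q l f)) μ + (q : ℂ) * hop q l (hop q l (hop q (l + 1) f)) μ
          = (1 + (q : ℂ)) * hop q l (hop q (l + 1) (hop q l f)) μ) ∧
    (∀ (l : ℤ) (f : Multiset ℤ → ℂ) (μ : Multiset ℤ),
        hop q (l + 1) (hop q (l + 1) (hop q l f)) μ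
            + (q : ℂ) * hop q l (hop q (l + 1) (hop q (l + 1) f)) μ
          = (1 + (q : ℂ)) * hop q (l + 1) (hop q l (hop q (l + 1) f)) μ) := by
  have hqne : q ≠ 1 := ne_of_lt hq1
  refine ⟨?_, ?_, ?_⟩
  · -- nonlocal commutativity
    intro l k hlk f μ
    have h2 : l + 1 ≠ k + 1 := by rcases abs_cases (l - k) with ⟨h, _⟩ | ⟨h, _⟩ <;> omega
    have h3 : l ≠ k + 1 := by rcases abs_cases (l - k) with ⟨h, _⟩ | ⟨h, _⟩ <;> omega
    have h4 : k ≠ l + 1 := by rcases abs_cases (l - k) with ⟨h, _⟩ | ⟨h, _⟩ <;> omega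
    simp only [hop, cre, ann]
    simp only [Multiset.count_cons, count_erase', if_neg h2, if_neg (Ne.symm h2),
      if_neg h3, if_neg (Ne.symm h3), if_neg h4, if_neg (Ne.symm h4), Nat.sub_zero, Nat.add_zero]
    split_ifs with ha hb hb
    · rw [show (k ::ₘ (l ::ₘ μ.erase (l+1)).erase (k+1))
          = (l ::ₘ (k ::ₘ μ.erase (k+1)).erase (l+1)) from
        Multiset.ext.mpr fun a => by
          simp only [Multiset.count_cons, count_erase']
          split_ifs <;> subst_vars <;> omega]
      ring
    · simp
    · simp
    · rfl
  · -- first quantum Knuth relation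
    intro l f μ
    have e1 : (l:ℤ) ≠ l+1 := by omega
    have e2 : (l:ℤ) ≠ l+1+1 := by omega
    have e3 : (l+1:ℤ) ≠ l+1+1 := by omega
    set ν : Multiset ℤ := l ::ₘ l ::ₘ ((μ.erase (l+1)).erase (l+1+1)) with hν
    have hA : hop q (l+1) (hop q l (hop q l f)) μ =
        if 0 < μ.count (l+1+1) ∧ 0 < μ.count (l+1) then
          (qint q (μ.count (l+1+1)) : ℂ) * (qint q (μ.count (l+1) + 1) : ℂ) *
            (qint q (μ.count (l+1)) : ℂ) * f ν
        else 0 := by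
      simp only [hop, cre, ann, Multiset.count_cons, count_erase', if_neg e1, if_neg e1.symm,
        if_neg e2, if_neg e2.symm, if_neg e3, if_neg e3.symm, eq_self_iff_true, if_true,
        Nat.sub_zero, Nat.add_sub_cancel, Nat.add_zero, hν]
      split_ifs
      all_goals first
      | rfl
      | (exfalso; omega)
      | (simp only [mul_zero]; try rfl)
      | (rw [← mul_assoc, ← mul_assoc]; congr 1; congr 1; ext a;
         simp only [Multiset.count_cons, count_erase']; split_ifs <;> subst_vars <;> omega)
    have hB : hop q l (hop q l (hop q (l+1) f)) μ =
        if 0 < μ.count (l+1+1) ∧ 0 < μ.count (l+1) then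
          (qint q (μ.count (l+1)) : ℂ) * (qint q (μ.count (l+1) - 1) : ℂ) *
            (qint q (μ.count (l+1+1)) : ℂ) * f ν
        else 0 := by
      simp only [hop, cre, ann, Multiset.count_cons, count_erase', if_neg e1, if_neg e1.symm,
        if_neg e2, if_neg e2.symm, if_neg e3, if_neg e3.symm, eq_self_iff_true, if_true,
        Nat.sub_zero, Nat.add_sub_cancel, Nat.add_zero, hν]
      split_ifs
      all_goals first
      | rfl
      | (exfalso; omega)
      | (rw [show μ.count (l+1) - 1 = 0 from by omega, qint_zero]; push_cast; ring)
      | (simp only [mul_zero]; try rfl)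
      | (rw [← mul_assoc, ← mul_assoc]; congr 1; congr 1; ext a;
         simp only [Multiset.count_cons, count_erase']; split_ifs <;> subst_vars <;> omega)
    have hC : hop q l (hop q (l+1) (hop q l f)) μ =
        if 0 < μ.count (l+1+1) ∧ 0 < μ.count (l+1) then
          (qint q (μ.count (l+1)) : ℂ) * (qint q (μ.count (l+1+1)) : ℂ) *
            (qint q (μ.count (l+1)) : ℂ) * f ν
        else 0 := by
      simp only [hop, cre, ann, Multiset.count_cons, count_erase', if_neg e1, if_neg e1.symm,
        if_neg e2, if_neg e2.symm, if_neg e3, if_neg e3.symm, eq_self_iff_true, if_true,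
        Nat.sub_zero, Nat.add_sub_cancel, Nat.add_zero, hν]
      split_ifs
      all_goals first
      | rfl
      | (exfalso; omega)
      | (simp only [mul_zero]; try rfl)
      | (rw [show μ.count (l+1) - 1 + 1 = μ.count (l+1) from by omega,
            ← mul_assoc, ← mul_assoc]; congr 1; congr 1; ext a;
         simp only [Multiset.count_cons, count_erase']; split_ifs <;> subst_vars <;> omega)
    rw [hA, hB, hC]
    split_ifs with h
    · have E := qint_rec q hqne (μ.count (l+1) - 1)
      rw [show μ.count (l+1) - 1 + 2 = μ.count (l+1) + 1 from by omega,
          show μ.count (l+1) - 1 + 1 = μ.count (l+1) from by omega] at E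
      have E' : ((qint q (μ.count (l+1) + 1) : ℝ) : ℂ) + (q : ℂ) * (qint q (μ.count (l+1) - 1) : ℝ)
          = (1 + (q : ℂ)) * (qint q (μ.count (l+1)) : ℝ) := by exact_mod_cast E
      linear_combination ((qint q (μ.count (l+1+1)) : ℂ) * (qint q (μ.count (l+1)) : ℂ) * f ν) * E'
    · ring
  · -- second quantum Knuth relation
    intro l f μ
    have e1 : (l:ℤ) ≠ l+1 := by omega
    have e2 : (l:ℤ) ≠ l+1+1 := by omega
    have e3 : (l+1:ℤ) ≠ l+1+1 := by omega
    set τ : Multiset ℤ := l ::ₘ (l+1) ::ₘ ((μ.erase (l+1+1)).erase (l+1+1)) with hτ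
    have hA : hop q (l+1) (hop q (l+1) (hop q l f)) μ =
        if 0 < μ.count (l+1+1) then
          (qint q (μ.count (l+1+1)) : ℂ) * (qint q (μ.count (l+1+1) - 1) : ℂ) *
            (qint q (μ.count (l+1) + 1 + 1) : ℂ) * f τ
        else 0 := by
      simp only [hop, cre, ann, Multiset.count_cons, count_erase', if_neg e1, if_neg e1.symm,
        if_neg e2, if_neg e2.symm, if_neg e3, if_neg e3.symm, eq_self_iff_true, if_true,
        Nat.sub_zero, Nat.add_sub_cancel, Nat.add_zero, hτ]
      split_ifs
      all_goals first
      | rfl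
      | (exfalso; omega)
      | (rw [show μ.count (l+1+1) - 1 = 0 from by omega, qint_zero]; push_cast; ring)
      | (simp only [mul_zero]; try rfl)
      | (rw [← mul_assoc, ← mul_assoc]; congr 1; congr 1; ext a;
         simp only [Multiset.count_cons, count_erase']; split_ifs <;> subst_vars <;> omega)
    have hB : hop q l (hop q (l+1) (hop q (l+1) f)) μ =
        if 0 < μ.count (l+1+1) ∧ 0 < μ.count (l+1) then
          (qint q (μ.count (l+1)) : ℂ) * (qint q (μ.count (l+1+1)) : ℂ) *
            (qint q (μ.count (l+1+1) - 1) : ℂ) * f τ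
        else 0 := by
      simp only [hop, cre, ann, Multiset.count_cons, count_erase', if_neg e1, if_neg e1.symm,
        if_neg e2, if_neg e2.symm, if_neg e3, if_neg e3.symm, eq_self_iff_true, if_true,
        Nat.sub_zero, Nat.add_sub_cancel, Nat.add_zero, hτ]
      split_ifs
      all_goals first
      | rfl
      | (exfalso; omega)
      | (rw [show μ.count (l+1+1) - 1 = 0 from by omega, qint_zero]; push_cast; ring)
      | (simp only [mul_zero]; try rfl)
      | (rw [← mul_assoc, ← mul_assoc]; congr 1; congr 1; ext a;
         simp only [Multiset.count_cons, count_erase']; split_ifs <;> subst_vars <;> omega)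
    have hC : hop q (l+1) (hop q l (hop q (l+1) f)) μ =
        if 0 < μ.count (l+1+1) then
          (qint q (μ.count (l+1+1)) : ℂ) * (qint q (μ.count (l+1) + 1) : ℂ) *
            (qint q (μ.count (l+1+1) - 1) : ℂ) * f τ
        else 0 := by
      simp only [hop, cre, ann, Multiset.count_cons, count_erase', if_neg e1, if_neg e1.symm,
        if_neg e2, if_neg e2.symm, if_neg e3, if_neg e3.symm, eq_self_iff_true, if_true,
        Nat.sub_zero, Nat.add_sub_cancel, Nat.add_zero, hτ]
      split_ifs
      all_goals first
      | rfl
      | (exfalso; omega)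
      | (rw [show μ.count (l+1+1) - 1 = 0 from by omega, qint_zero]; push_cast; ring)
      | (simp only [mul_zero]; try rfl)
      | (rw [← mul_assoc, ← mul_assoc]; congr 1; congr 1; ext a;
         simp only [Multiset.count_cons, count_erase']; split_ifs <;> subst_vars <;> omega)
    rw [hA, hB, hC]
    have E := qint_rec q hqne (μ.count (l+1))
    rw [show μ.count (l+1) + 2 = μ.count (l+1) + 1 + 1 from by omega] at E
    have E' : ((qint q (μ.count (l+1) + 1 + 1) : ℝ) : ℂ) + (q : ℂ) * (qint q (μ.count (l+1)) : ℝ)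
        = (1 + (q : ℂ)) * (qint q (μ.count (l+1) + 1) : ℝ) := by exact_mod_cast E
    split_ifs with h h2
    · linear_combination ((qint q (μ.count (l+1+1)) : ℂ) * (qint q (μ.count (l+1+1) - 1) : ℂ)
        * f τ) * E'
    · have hm0 : μ.count (l+1) = 0 := by omega
      have Z : ((qint q (μ.count (l+1)) : ℝ) : ℂ) = 0 := by rw [hm0, qint_zero]; simp
      linear_combination ((qint q (μ.count (l+1+1)) : ℂ) * (qint q (μ.count (l+1+1) - 1) : ℂ)
          * f τ) * E'
        - (q : ℂ) * ((qint q (μ.count (l+1+1)) : ℂ) * (qint q (μ.count (l+1+1) - 1) : ℂ)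
          * f τ) * Z
    · exfalso; omega
    · ring
end

section
/- For the hopping operator a_l^* := β_{l+1} β_l^*, for any m ≥ 1, f ∈ F(Λ_n) and λ ∈ Λ_n: ((a_l^*)^m f)(λ) = [m]! · qbinom(m_l(λ), m) · f(a_l^m λ) if m ≤ m_l(λ), and 0 if m > m_l(λ); here a_l^m λ = λ + e_d + e_{d+1} + ... + e_{d+m-1} with d := min{j : λ_j = l}, which is again weakly decreasing when m ≤ m_l(λ). -/
/-- Hopping operator `a_l^* := β_{l+1} β_l^*`. -/
noncomputable def hopA (q : ℝ) (l : ℤ) (f : Multiset ℤ → ℂ) : Multiset ℤ → ℂ :=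
  ann (l + 1) (cre q l f)

/-- `a_l^m λ`: the state obtained from `λ` by moving `m` particles from site `l` to `l+1`. -/
def hopState (l : ℤ) (m : ℕ) (μ : Multiset ℤ) : Multiset ℤ :=
  Multiset.replicate m (l + 1) + (μ - Multiset.replicate m l)

lemma qint_pos (q : ℝ) (hq : 0 < q) (hq1 : q < 1) (m : ℕ) : 0 < qint q (m + 1) := by
  have h1 : q ^ (m+1) < 1 := pow_lt_one₀ hq.le hq1 (Nat.succ_ne_zero m)
  unfold qint
  exact div_pos (by linarith) (by linarith)

lemma qfact_pos (q : ℝ) (hq : 0 < q) (hq1 : q < 1) (m : ℕ) : 0 < qfact q m := by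
  unfold qfact
  exact Finset.prod_pos (fun i _ => qint_pos q hq hq1 i)

lemma qfact_ne (q : ℝ) (hq : 0 < q) (hq1 : q < 1) (m : ℕ) : qfact q m ≠ 0 :=
  (qfact_pos q hq hq1 m).ne'

lemma key (q : ℝ) (hq : 0 < q) (hq1 : q < 1) (k n : ℕ) (h : k ≤ n) :
    qfact q k * qbinom q n k = qfact q n / qfact q (n - k) := by
  unfold qbinom
  rw [eq_div_iff (qfact_ne q hq hq1 (n - k))]
  field_simp
  rw [show qfact q k * qfact q n * qfact q (n - k)
        = qfact q n * (qfact q k * qfact q (n - k)) by ring,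
    mul_div_cancel_right₀ _ (mul_ne_zero (qfact_ne q hq hq1 k) (qfact_ne q hq hq1 (n - k)))]

lemma scalar_step (q : ℝ) (hq : 0 < q) (hq1 : q < 1) (c m : ℕ) (h : m + 1 ≤ c) :
    qint q c * (qfact q m * qbinom q (c - 1) m)
      = qfact q (m + 1) * qbinom q c (m + 1) := by
  rw [key q hq hq1 m (c-1) (by omega), key q hq hq1 (m+1) c h]
  have hc : c - 1 - m = c - (m + 1) := by omega
  have hfc : qfact q c = qfact q (c - 1) * qint q c := by
    have : c = (c - 1) + 1 := by omega
    rw [this, qfact, Finset.prod_range_succ]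
    rw [← this]
    rfl
  rw [hc, hfc]
  ring

lemma hopState_step (l : ℤ) (m : ℕ) (μ : Multiset ℤ) (h : 0 < μ.count l) :
    hopState l m ((l + 1) ::ₘ μ.erase l) = hopState l (m + 1) μ := by
  ext x
  simp only [hopState, Multiset.count_add, Multiset.count_sub, Multiset.count_replicate,
    Multiset.count_cons]
  rcases eq_or_ne x l with rfl | h2
  · rw [Multiset.count_erase_self]
    split_ifs <;> omega
  · rw [Multiset.count_erase_of_ne h2]
    split_ifs <;> omega

theorem creation_power_action (q : ℝ) (hq : 0 < q) (hq1 : q < 1) (l : ℤ) (m : ℕ)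
    (hm : 1 ≤ m) (f : Multiset ℤ → ℂ) (μ : Multiset ℤ) :
    (hopA q l)^[m] f μ
      = if m ≤ μ.count l then
          ((qfact q m * qbinom q (μ.count l) m : ℝ) : ℂ) * f (hopState l m μ)
        else 0 := by
  clear hm
  induction m generalizing μ with
  | zero =>
    rw [if_pos (Nat.zero_le _)]
    have h0 : qfact q 0 = 1 := by simp [qfact]
    have h1 : qbinom q (μ.count l) 0 = 1 := by
      rw [qbinom, Nat.sub_zero, h0, one_mul, div_self (qfact_ne q hq hq1 _)]
    have h2 : hopState l 0 μ = μ := by simp [hopState]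
    simp [h0, h1, h2]
  | succ m ih =>
    rw [Function.iterate_succ_apply']
    show cre q l ((hopA q l)^[m] f) ((l + 1) ::ₘ μ) = _
    rw [cre]
    have hcount : Multiset.count l ((l + 1) ::ₘ μ) = Multiset.count l μ :=
      Multiset.count_cons_of_ne (by omega) μ
    simp only [hcount]
    by_cases hc : 0 < μ.count l
    · rw [if_pos hc]
      have herase : ((l + 1) ::ₘ μ).erase l = (l + 1) ::ₘ μ.erase l :=
        Multiset.erase_cons_tail _ (by omega)
      rw [herase, ih]
      have hc' : ((l + 1) ::ₘ μ.erase l).count l = μ.count l - 1 := by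
        rw [Multiset.count_cons_of_ne (by omega), Multiset.count_erase_self]
      rw [hc']
      by_cases hmc : m + 1 ≤ μ.count l
      · rw [if_pos (by omega), if_pos hmc, hopState_step l m μ hc]
        have hkey : ((qfact q (m + 1) * qbinom q (μ.count l) (m + 1) : ℝ) : ℂ)
            = (qint q (μ.count l) : ℂ)
              * ((qfact q m * qbinom q (μ.count l - 1) m : ℝ) : ℂ) := by
          rw [← scalar_step q hq hq1 _ m hmc]; push_cast; ring
        rw [hkey]; ring
      · rw [if_neg (by omega), if_neg hmc, mul_zero]
    · rw [if_neg hc, if_neg (by omega)]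
end

section
/- Define H_r^* := Σ_{|η|=r} m_η(a^*)/[η]!, where the sum is over partitions η of r and m_η(a^*) := Σ'_{σ∈S_p} Σ_{l_1 > ... > l_p} (a^*_{l_1})^{η_{σ_1}}⋯(a^*_{l_p})^{η_{σ_p}} (the primed sum over distinct reorderings of η). Then for f ∈ F(Λ_n) and λ ∈ Λ_n: (H_r^* f)(λ) = Σ_J V_{λ,J} f(λ + e_J), summed over subsets J ⊆ {1,...,n} with |J| = r and λ + e_J weakly decreasing, where V_{λ,J} = Π_{j<k, j∈J, k∉J, λ_j=λ_k} (1-q^{k-j+1})/(1-q^{k-j}). In particular H_r^* annihilates F(Λ_n) when r > n. -/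
open scoped Classical

/-- The monomial `(a^*_{l_1})^{m_1} ⋯ (a^*_{l_p})^{m_p}` with `l_1 > l_2 > ⋯ > l_p` the distinct
elements of the multiset `ν` and `m_i` their multiplicities in `ν` (the operator for the
largest site is applied last, i.e. outermost). -/
noncomputable def opMon (q : ℝ) (ν : Multiset ℤ) (f : Multiset ℤ → ℂ) : Multiset ℤ → ℂ :=
  (ν.toFinset.sort (· ≤ ·)).foldl (fun g l => (hopA q l)^[ν.count l] g) f

/-- `(H_r^* f)(μ) = Σ_{|η| = r} (m_η(a^*) f)(μ) / [η]!`; each pair of a partition `η` of `r` and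
a strictly decreasing tuple of sites decorated with a reordering of `η` corresponds uniquely to a
multiset `ν` of cardinality `r` (sites = distinct elements, parts = multiplicities). -/
noncomputable def HrStarTerm (q : ℝ) (r : ℕ) (f : Multiset ℤ → ℂ) (μ : Multiset ℤ)
    (ν : Multiset ℤ) : ℂ :=
  if Multiset.card ν = r then
    (((∏ l ∈ ν.toFinset, qfact q (ν.count l))⁻¹ : ℝ) : ℂ) * opMon q ν f μ
  else 0

def toM {n : ℕ} (lam : Fin n → ℤ) : Multiset ℤ := Multiset.map lam Finset.univ.val


noncomputable def ffq (q : ℝ) (c m : ℕ) : ℝ := ∏ i ∈ Finset.range m, qint q (c - i)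

lemma hopA_apply (q : ℝ) (l : ℤ) (f : Multiset ℤ → ℂ) (μ : Multiset ℤ) :
    hopA q l f μ = if 0 < μ.count l then
      (qint q (μ.count l) : ℂ) * f ((l+1) ::ₘ μ.erase l) else 0 := by
  simp only [hopA, ann, cre]
  rw [Multiset.count_cons_of_ne (by omega), Multiset.erase_cons_tail _ (by omega)]

lemma ffq_succ (q : ℝ) (c m : ℕ) (hc : 0 < c) :
    ffq q c (m+1) = ffq q (c-1) m * qint q c := by
  rw [ffq, Finset.prod_range_succ', Nat.sub_zero]
  congr 1
  exact Finset.prod_congr rfl fun i _ => by congr 1; omega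

lemma hopIter (q : ℝ) (l : ℤ) (m : ℕ) (f : Multiset ℤ → ℂ) (μ : Multiset ℤ) :
    (hopA q l)^[m] f μ =
      if m ≤ μ.count l then
        ((ffq q (μ.count l) m : ℝ) : ℂ) *
          f (Multiset.replicate m (l+1) + (μ - Multiset.replicate m l))
      else 0 := by
  induction m generalizing f μ with
  | zero => simp [ffq]
  | succ m ih =>
    rw [Function.iterate_succ_apply', hopA_apply]
    by_cases hc : 0 < μ.count l
    · rw [if_pos hc, ih]
      have hcount : ((l+1) ::ₘ μ.erase l).count l = μ.count l - 1 := by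
        rw [Multiset.count_cons_of_ne (by omega), Multiset.count_erase_self]
      rw [hcount]
      by_cases hm : m ≤ μ.count l - 1
      · rw [if_pos hm, if_pos (by omega)]
        have hms : Multiset.replicate m (l+1) + ((l+1) ::ₘ μ.erase l - Multiset.replicate m l)
            = Multiset.replicate (m+1) (l+1) + (μ - Multiset.replicate (m+1) l) := by
          ext x
          have hx : Multiset.count x (μ.erase l)
              = Multiset.count x μ - (if x = l then 1 else 0) := by
            by_cases h : x = l
            · subst h; simp [Multiset.count_erase_self]
            · simp [Multiset.count_erase_of_ne h, h]
          simp only [Multiset.count_add, Multiset.count_sub, Multiset.count_replicate,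
            Multiset.count_cons, hx]
          have hcl : m + 1 ≤ Multiset.count l μ := by omega
          rcases (by omega : x = l ∨ x = l + 1 ∨ (x ≠ l ∧ x ≠ l + 1)) with h | h | ⟨h1, h2⟩
          · subst h
            split_ifs <;> omega
          · subst h
            split_ifs <;> omega
          · split_ifs <;> omega
        rw [hms]
        rw [ffq_succ q _ m hc]
        push_cast
        ring
      · rw [if_neg hm, if_neg (by omega), mul_zero]
    · rw [if_neg hc, if_neg (by omega)]

lemma count_sumrep (m : ℤ → ℕ) (x : ℤ) :
    ∀ L : List ℤ, L.Nodup →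
      Multiset.count x (L.map fun s => Multiset.replicate (m s) s).sum
        = if x ∈ L then m x else 0 := by
  intro L
  induction L with
  | nil => simp
  | cons a L ih =>
    intro hnd
    rw [List.nodup_cons] at hnd
    simp only [List.map_cons, List.sum_cons, Multiset.count_add, ih hnd.2,
      Multiset.count_replicate, List.mem_cons]
    by_cases h : x = a
    · subst h
      rw [if_pos rfl, if_neg hnd.1, if_pos (by left; rfl)]
      omega
    · rw [if_neg (Ne.symm h)]
      simp [h]

lemma count_map_add_one (S : Multiset ℤ) (x : ℤ) :
    (S.map (· + 1)).count x = S.count (x - 1) := by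
  have := Multiset.count_map_eq_count' (fun a : ℤ => a + 1) S
    (fun a b h => by simpa using h) (x - 1)
  simpa using this

lemma foldl_formula (q : ℝ) (ν : Multiset ℤ) :
    ∀ L : List ℤ, L.Pairwise (· < ·) → ∀ (f : Multiset ℤ → ℂ) (μ : Multiset ℤ),
    L.foldl (fun g l => (hopA q l)^[ν.count l] g) f μ =
      if ∀ l ∈ L, ν.count l ≤ μ.count l then
        (((L.map fun l => ffq q (μ.count l) (ν.count l)).prod : ℝ) : ℂ) *
          f ((((L.map fun s => Multiset.replicate (ν.count s) s).sum).map (· + 1))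
             + (μ - (L.map fun s => Multiset.replicate (ν.count s) s).sum))
      else 0 := by
  intro L
  induction L using List.reverseRecOn with
  | nil => intro _ f μ; simp
  | append_singleton L l ih =>
    intro hP f μ
    rw [List.pairwise_append] at hP
    obtain ⟨hPL, -, hlt⟩ := hP
    have hlt' : ∀ s ∈ L, s < l := fun s hs => hlt s hs l (List.mem_singleton_self l)
    have hnd : L.Nodup := hPL.imp ne_of_lt
    set S : Multiset ℤ := (L.map fun s => Multiset.replicate (ν.count s) s).sum with hS
    have hSnot : ∀ x : ℤ, x ∉ L → Multiset.count x S = 0 := by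
      intro x hx; rw [hS, count_sumrep _ _ _ hnd, if_neg hx]
    have hSmem : ∀ x ∈ L, Multiset.count x S = ν.count x := by
      intro x hx; rw [hS, count_sumrep _ _ _ hnd, if_pos hx]
    have hSl : Multiset.count l S = 0 := hSnot l (fun h => lt_irrefl l (hlt' l h))
    have hSl1 : Multiset.count (l+1) S = 0 :=
      hSnot _ (fun h => by have := hlt' _ h; omega)
    rw [List.foldl_append, List.foldl_cons, List.foldl_nil, hopIter]
    by_cases hc1 : ν.count l ≤ μ.count l
    · rw [if_pos hc1]
      set μ₁ : Multiset ℤ :=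
        Multiset.replicate (ν.count l) (l+1) + (μ - Multiset.replicate (ν.count l) l) with hμ₁
      rw [ih hPL f μ₁]
      have hcnt : ∀ s ∈ L, Multiset.count s μ₁ = Multiset.count s μ := by
        intro s hs
        have h1 : s ≠ l + 1 := by have := hlt' s hs; omega
        have h2 : s ≠ l := by have := hlt' s hs; omega
        simp only [hμ₁, Multiset.count_add, Multiset.count_sub, Multiset.count_replicate]
        split_ifs <;> omega
      by_cases hc2 : ∀ s ∈ L, ν.count s ≤ μ.count s
      · have hcondL : ∀ s ∈ L, ν.count s ≤ μ₁.count s :=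
          fun s hs => (hcnt s hs).symm ▸ hc2 s hs
        have hcondLl : ∀ s ∈ L ++ [l], ν.count s ≤ μ.count s := by
          intro s hs
          rcases List.mem_append.mp hs with h | h
          · exact hc2 s h
          · rw [List.mem_singleton.mp h]; exact hc1
        rw [if_pos hcondL, if_pos hcondLl]
        have hmap : (L.map fun s => ffq q (μ₁.count s) (ν.count s))
            = L.map fun s => ffq q (μ.count s) (ν.count s) :=
          List.map_congr_left fun s hs => by rw [hcnt s hs]
        rw [hmap]
        have hsum : ((L ++ [l]).map fun s => Multiset.replicate (ν.count s) s).sum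
            = S + Multiset.replicate (ν.count l) l := by simp [hS]
        have hprod : (((L ++ [l]).map fun s => ffq q (μ.count s) (ν.count s)).prod : ℝ)
            = (L.map fun s => ffq q (μ.count s) (ν.count s)).prod * ffq q (μ.count l) (ν.count l) := by
          simp
        rw [hsum, hprod]
        have hms : (S.map (· + 1)) + (μ₁ - S)
            = ((S + Multiset.replicate (ν.count l) l).map (· + 1))
              + (μ - (S + Multiset.replicate (ν.count l) l)) := by
          ext x
          have hSx : Multiset.count x S ≤ Multiset.count x μ := by
            by_cases hxL : x ∈ L
            · rw [hSmem x hxL]; exact hc2 x hxL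
            · rw [hSnot x hxL]; omega
          simp only [Multiset.count_add, Multiset.count_sub, Multiset.map_add,
            Multiset.map_replicate, count_map_add_one, Multiset.count_replicate, hμ₁]
          rcases (by omega : x = l ∨ x = l + 1 ∨ (x ≠ l ∧ x ≠ l + 1)) with h | h | ⟨h1, h2⟩
          · subst h
            have : Multiset.count x S = 0 := hSl
            split_ifs <;> omega
          · subst h
            have hxS : Multiset.count (l+1) S = 0 := hSl1
            split_ifs <;> omega
          · split_ifs <;> omega
        rw [hms]
        push_cast
        ring
      · push_neg at hc2
        obtain ⟨s, hs, hslt⟩ := hc2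
        have hA : ¬ ∀ t ∈ L, ν.count t ≤ μ₁.count t := by
          push_neg
          exact ⟨s, hs, by rw [hcnt s hs]; exact hslt⟩
        have hB : ¬ ∀ t ∈ L ++ [l], ν.count t ≤ μ.count t := by
          push_neg
          exact ⟨s, List.mem_append.mpr (Or.inl hs), hslt⟩
        rw [if_neg hA, if_neg hB, mul_zero]
    · have hB : ¬ ∀ t ∈ L ++ [l], ν.count t ≤ μ.count t := by
        push_neg
        exact ⟨l, List.mem_append.mpr (Or.inr (List.mem_singleton_self l)), by omega⟩
      rw [if_neg hc1, if_neg hB]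

lemma list_sum_sort (s : Finset ℤ) (g : ℤ → Multiset ℤ) :
    ((s.sort (· ≤ ·)).map g).sum = ∑ l ∈ s, g l := by
  rw [Finset.sum_eq_multiset_sum, ← Finset.sort_eq s (· ≤ ·), Multiset.map_coe,
    Multiset.sum_coe]

lemma list_prod_sort (s : Finset ℤ) (g : ℤ → ℝ) :
    ((s.sort (· ≤ ·)).map g).prod = ∏ l ∈ s, g l := by
  rw [Finset.prod_eq_multiset_prod, ← Finset.sort_eq s (· ≤ ·), Multiset.map_coe,
    Multiset.prod_coe]

lemma sum_rep_toFinset (ν : Multiset ℤ) :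
    ∑ l ∈ ν.toFinset, Multiset.replicate (ν.count l) l = ν := by
  calc ∑ l ∈ ν.toFinset, Multiset.replicate (ν.count l) l
      = ∑ l ∈ ν.toFinset, ν.count l • ({l} : Multiset ℤ) := by
        exact Finset.sum_congr rfl fun l _ => (Multiset.nsmul_singleton _ _).symm
    _ = ν := Multiset.toFinset_sum_count_nsmul_eq ν

lemma opMon_formula (q : ℝ) (ν : Multiset ℤ) (f : Multiset ℤ → ℂ) (μ : Multiset ℤ) :
    opMon q ν f μ =
      if ν ≤ μ then
        (((∏ l ∈ ν.toFinset, ffq q (μ.count l) (ν.count l)) : ℝ) : ℂ) *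
          f (ν.map (· + 1) + (μ - ν))
      else 0 := by
  have hP : (ν.toFinset.sort (· ≤ ·)).Pairwise (· < ·) := (Finset.sortedLT_sort _).pairwise
  rw [opMon, foldl_formula q ν _ hP f μ]
  have hsum : ((ν.toFinset.sort (· ≤ ·)).map fun s => Multiset.replicate (ν.count s) s).sum
      = ν := by rw [list_sum_sort, sum_rep_toFinset]
  have hcond : (∀ l ∈ ν.toFinset.sort (· ≤ ·), ν.count l ≤ μ.count l) ↔ ν ≤ μ := by
    rw [Multiset.le_iff_count]
    constructor
    · intro h a
      by_cases ha : a ∈ ν.toFinset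
      · exact h a ((Finset.mem_sort _).mpr ha)
      · rw [Multiset.count_eq_zero_of_notMem (fun h' => ha (Multiset.mem_toFinset.mpr h'))]
        omega
    · intro h l _
      exact h l
  rw [hsum, list_prod_sort]
  by_cases h : ν ≤ μ
  · rw [if_pos (hcond.mpr h), if_pos h]
  · rw [if_neg (fun hh => h (hcond.mp hh)), if_neg h]

lemma HrStarTerm_eq (q : ℝ) (r : ℕ) (f : Multiset ℤ → ℂ) (μ ν : Multiset ℤ) :
    HrStarTerm q r f μ ν =
      if Multiset.card ν = r ∧ ν ≤ μ then
        (((∏ l ∈ ν.toFinset, (qfact q (ν.count l))⁻¹ * ffq q (μ.count l) (ν.count l)) : ℝ) : ℂ) *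
          f (ν.map (· + 1) + (μ - ν))
      else 0 := by
  rw [HrStarTerm]
  by_cases hcard : Multiset.card ν = r
  · rw [if_pos hcard, opMon_formula]
    by_cases h : ν ≤ μ
    · rw [if_pos h, if_pos ⟨hcard, h⟩, Finset.prod_mul_distrib, ← Finset.prod_inv_distrib]
      push_cast
      ring
    · rw [if_neg h, if_neg (fun hh => h hh.2), mul_zero]
  · rw [if_neg hcard, if_neg (fun hh => hcard hh.1)]

section Blocks
variable {n : ℕ} (lam : Fin n → ℤ)

noncomputable def Sv (v : ℤ) : ℕ := (Finset.univ.filter fun k : Fin n => v < lam k).card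
noncomputable def cB (v : ℤ) : ℕ := (Finset.univ.filter fun k : Fin n => lam k = v).card
noncomputable def Jof (m : ℤ → ℕ) : Finset (Fin n) :=
  Finset.univ.filter fun j => (j : ℕ) < Sv lam (lam j) + m (lam j)

lemma card_filter_Ico (a b : ℕ) (hb : b ≤ n) :
    ((Finset.univ : Finset (Fin n)).filter fun k : Fin n => a ≤ (k : ℕ) ∧ (k : ℕ) < b).card = b - a := by
  rw [← Nat.card_Ico a b]
  refine Finset.card_bij (fun k _ => (k : ℕ)) ?_ ?_ ?_
  · intro k hk
    simp only [Finset.mem_filter] at hk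
    exact Finset.mem_Ico.mpr ⟨hk.2.1, hk.2.2⟩
  · intro k1 h1 k2 h2 h
    exact Fin.val_injective (by simpa using h)
  · intro x hx
    rw [Finset.mem_Ico] at hx
    exact ⟨⟨x, lt_of_lt_of_le hx.2 hb⟩, by simp [hx.1, hx.2], rfl⟩

lemma filter_down (hlam : Antitone lam) {p : ℤ → Prop} [DecidablePred p] (hp : ∀ a b : ℤ, a ≤ b → p a → p b) (k : Fin n) :
    (k : ℕ) < (Finset.univ.filter fun j => p (lam j)).card ↔ p (lam k) := by
  constructor
  · intro h
    by_contra hk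
    have hsub : (Finset.univ.filter fun j => p (lam j))
        ⊆ Finset.univ.filter fun j : Fin n => (0:ℕ) ≤ (j : ℕ) ∧ (j : ℕ) < (k : ℕ) := by
      intro j hj
      simp only [Finset.mem_filter, Finset.mem_univ, true_and] at hj ⊢
      refine ⟨Nat.zero_le _, ?_⟩
      by_contra hjk
      exact hk (hp _ _ (hlam (Fin.le_def.mpr (by omega))) hj)
    have := Finset.card_le_card hsub
    rw [card_filter_Ico _ _ (le_of_lt k.isLt)] at this
    omega
  · intro h
    have hsub : (Finset.univ.filter fun j : Fin n => (0:ℕ) ≤ (j : ℕ) ∧ (j : ℕ) < (k : ℕ) + 1)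
        ⊆ Finset.univ.filter fun j => p (lam j) := by
      intro j hj
      simp only [Finset.mem_filter, Finset.mem_univ, true_and] at hj ⊢
      exact hp _ _ (hlam (Fin.le_def.mpr (by omega))) h
    have := Finset.card_le_card hsub
    rw [card_filter_Ico _ _ k.isLt] at this
    omega

lemma Sv_lt_iff (hlam : Antitone lam) (k : Fin n) (v : ℤ) : (k : ℕ) < Sv lam v ↔ v < lam k := by
  rw [Sv]
  exact filter_down lam hlam (fun a b hab ha => lt_of_lt_of_le ha hab) k

lemma Sv_add_cB (v : ℤ) :
    Sv lam v + cB lam v = (Finset.univ.filter fun j => v ≤ lam j).card := by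
  rw [Sv, cB, ← Finset.card_union_of_disjoint]
  · congr 1
    rw [← Finset.filter_or]
    apply Finset.filter_congr
    intro j _
    constructor
    · intro h; rcases h with h | h
      · exact le_of_lt h
      · exact le_of_eq h.symm
    · intro h; rcases lt_or_eq_of_le h with h | h
      · exact Or.inl h
      · exact Or.inr h.symm
  · rw [Finset.disjoint_left]
    intro a ha hb
    simp only [Finset.mem_filter, Finset.mem_univ, true_and] at ha hb
    omega

lemma SvcB_lt_iff (hlam : Antitone lam) (k : Fin n) (v : ℤ) :
    (k : ℕ) < Sv lam v + cB lam v ↔ v ≤ lam k := by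
  rw [Sv_add_cB]
  exact filter_down lam hlam (fun a b hab ha => le_trans ha hab) k

lemma block_iff (hlam : Antitone lam) (k : Fin n) (v : ℤ) :
    lam k = v ↔ Sv lam v ≤ (k : ℕ) ∧ (k : ℕ) < Sv lam v + cB lam v := by
  constructor
  · intro h
    refine ⟨?_, (SvcB_lt_iff lam hlam k v).mpr (le_of_eq h.symm)⟩
    rw [← not_lt, Sv_lt_iff lam hlam]
    omega
  · rintro ⟨h1, h2⟩
    have ha := (SvcB_lt_iff lam hlam k v).mp h2
    have hb : ¬ v < lam k := by
      rw [← Sv_lt_iff lam hlam]; omega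
    omega

lemma SvcB_le (v : ℤ) : Sv lam v + cB lam v ≤ n := by
  rw [Sv_add_cB]
  calc (Finset.univ.filter fun j => v ≤ lam j).card ≤ (Finset.univ : Finset (Fin n)).card :=
        Finset.card_le_card (Finset.filter_subset _ _)
    _ = n := by simp

lemma count_toM (v : ℤ) : (toM lam).count v = cB lam v := by
  have h1 : cB lam v = Multiset.card (Multiset.filter (fun k => lam k = v) Finset.univ.val) := by
    rw [cB]
    rfl
  rw [toM, Multiset.count_map, h1]
  congr 1
  apply Multiset.filter_congr
  intro a _
  exact eq_comm




variable {n : ℕ} (lam : Fin n → ℤ)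

lemma mem_Jof (m : ℤ → ℕ) (j : Fin n) :
    j ∈ Jof lam m ↔ (j : ℕ) < Sv lam (lam j) + m (lam j) := by
  simp [Jof]

lemma Jof_filter_eq (hlam : Antitone lam) (m : ℤ → ℕ) (hm : ∀ v, m v ≤ cB lam v) (v : ℤ) :
    (Jof lam m).filter (fun j => lam j = v)
      = Finset.univ.filter fun j : Fin n => Sv lam v ≤ (j : ℕ) ∧ (j : ℕ) < Sv lam v + m v := by
  ext j
  simp only [Finset.mem_filter, Finset.mem_univ, true_and, mem_Jof]
  constructor
  · rintro ⟨hj, hv⟩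
    rw [hv] at hj
    exact ⟨((block_iff lam hlam j v).mp hv).1, hj⟩
  · rintro ⟨h1, h2⟩
    have hv : lam j = v := (block_iff lam hlam j v).mpr ⟨h1, by have := hm v; omega⟩
    exact ⟨by rw [hv]; exact h2, hv⟩

lemma card_Jof_filter (hlam : Antitone lam) (m : ℤ → ℕ) (hm : ∀ v, m v ≤ cB lam v) (v : ℤ) :
    ((Jof lam m).filter fun j => lam j = v).card = m v := by
  rw [Jof_filter_eq lam hlam m hm v,
    card_filter_Ico _ _ (by have := SvcB_le lam v; have := hm v; omega)]
  omega

lemma antitone_Jof (hlam : Antitone lam) (m : ℤ → ℕ) (hm : ∀ v, m v ≤ cB lam v) :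
    Antitone (fun k => lam k + if k ∈ Jof lam m then 1 else 0) := by
  intro j k hjk
  simp only
  have hl : lam k ≤ lam j := hlam hjk
  by_cases hk : k ∈ Jof lam m
  · rcases eq_or_lt_of_le hl with he | hlt
    · have hj : j ∈ Jof lam m := by
        rw [mem_Jof] at hk ⊢
        rw [he] at hk
        have hjk' : (j : ℕ) ≤ (k : ℕ) := hjk
        omega
      simp only [hj, hk, if_true]
      omega
    · simp only [hk, if_true]
      split_ifs <;> omega
  · simp only [hk, if_false]
    split_ifs <;> omega

lemma J_downward (J : Finset (Fin n))
    (hJ : Antitone (fun k => lam k + if k ∈ J then 1 else 0)) :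
    ∀ j k : Fin n, j ≤ k → lam j = lam k → k ∈ J → j ∈ J := by
  intro j k hjk hv hk
  by_contra hj
  have h := hJ hjk
  simp only [hj, hk, if_true, if_false] at h
  omega

lemma J_eq_Jof (hlam : Antitone lam) (J : Finset (Fin n))
    (hJ : Antitone (fun k => lam k + if k ∈ J then 1 else 0)) :
    J = Jof lam (fun v => (J.filter fun j => lam j = v).card) := by
  ext j
  rw [mem_Jof]
  have hblock := (block_iff lam hlam j (lam j)).mp rfl
  constructor
  · intro hj
    have hsub : (Finset.univ.filter fun k : Fin n =>
          Sv lam (lam j) ≤ (k : ℕ) ∧ (k : ℕ) < (j : ℕ) + 1)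
        ⊆ J.filter fun k => lam k = lam j := by
      intro k hk
      simp only [Finset.mem_filter, Finset.mem_univ, true_and] at hk ⊢
      have hkv : lam k = lam j := (block_iff lam hlam k (lam j)).mpr ⟨hk.1, by omega⟩
      exact ⟨J_downward lam J hJ k j (Fin.le_def.mpr (by omega)) hkv hj, hkv⟩
    have hcard := Finset.card_le_card hsub
    rw [card_filter_Ico _ _ (by exact j.isLt)] at hcard
    omega
  · intro hj
    by_contra hjJ
    have hsub : (J.filter fun k => lam k = lam j)
        ⊆ Finset.univ.filter fun k : Fin n => Sv lam (lam j) ≤ (k : ℕ) ∧ (k : ℕ) < (j : ℕ) := by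
      intro k hk
      simp only [Finset.mem_filter, Finset.mem_univ, true_and] at hk ⊢
      have h1 : Sv lam (lam j) ≤ (k : ℕ) := ((block_iff lam hlam k (lam j)).mp hk.2).1
      refine ⟨h1, ?_⟩
      by_contra hkj
      exact hjJ (J_downward lam J hJ j k (Fin.le_def.mpr (by omega)) hk.2.symm hk.1)
    have hcard := Finset.card_le_card hsub
    rw [card_filter_Ico _ _ (le_of_lt j.isLt)] at hcard
    omega

lemma mJ_le_cB (J : Finset (Fin n)) (v : ℤ) :
    (J.filter fun j => lam j = v).card ≤ cB lam v := by
  apply Finset.card_le_card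
  intro k hk
  simp only [Finset.mem_filter, Finset.mem_univ, true_and] at hk ⊢
  exact hk.2

end Blocks

section Coef
variable {q : ℝ}

lemma Nq_pos (hq0 : 0 < q) (hq1 : q < 1) (e : ℕ) (he : 0 < e) : 0 < 1 - q ^ e := by
  have : q ^ e < 1 := pow_lt_one₀ (le_of_lt hq0) hq1 (by omega)
  linarith

lemma Nq_ne (hq0 : 0 < q) (hq1 : q < 1) (e : ℕ) (he : 0 < e) : (1 : ℝ) - q ^ e ≠ 0 :=
  ne_of_gt (Nq_pos hq0 hq1 e he)

lemma telescope (hq0 : 0 < q) (hq1 : q < 1) (j a b : ℕ) (hj : j < a) (hb : a ≤ b) :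
    ∏ k ∈ Finset.Ico a b, (1 - q ^ (k - j + 1)) / (1 - q ^ (k - j))
      = (1 - q ^ (b - j)) / (1 - q ^ (a - j)) := by
  induction b, hb using Nat.le_induction with
  | base =>
    rw [Finset.Ico_self, Finset.prod_empty, div_self (Nq_ne hq0 hq1 (a - j) (by omega))]
  | succ b hb ih =>
    rw [Finset.prod_Ico_succ_top hb, ih]
    have h1 : (1 : ℝ) - q ^ (b - j) ≠ 0 := Nq_ne hq0 hq1 _ (by omega)
    have h2 : b - j + 1 = b + 1 - j := by omega
    rw [h2]
    exact div_mul_div_cancel₀' h1 _ _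

lemma qbinom_eq (hq0 : 0 < q) (hq1 : q < 1) (c m : ℕ) (hm : m ≤ c) :
    (qfact q m)⁻¹ * ffq q c m
      = ∏ i ∈ Finset.range m, (1 - q ^ (c - i)) / (1 - q ^ (m - i)) := by
  have h1q : (1 : ℝ) - q ≠ 0 := by linarith
  rw [inv_mul_eq_div, qfact, ffq, ← Finset.prod_div_distrib]
  have step1 : ∀ i ∈ Finset.range m, qint q (c - i) / qint q (i + 1)
      = (1 - q ^ (c - i)) / (1 - q ^ (i + 1)) := by
    intro i _
    rw [qint, qint, div_div_div_comm, div_self h1q, div_one]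
  rw [Finset.prod_congr rfl step1, Finset.prod_div_distrib, Finset.prod_div_distrib]
  congr 1
  have : ∀ i ∈ Finset.range m, (1 : ℝ) - q ^ (m - i) = 1 - q ^ ((m - 1 - i) + 1) := by
    intro i hi
    rw [Finset.mem_range] at hi
    have hx : m - i = (m - 1 - i) + 1 := by omega
    rw [hx]
  rw [Finset.prod_congr rfl this]
  exact (Finset.prod_range_reflect (fun i => 1 - q ^ (i + 1)) m).symm

lemma Vcoef_eq (hq0 : 0 < q) (hq1 : q < 1) {n : ℕ} (lam : Fin n → ℤ) (hlam : Antitone lam)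
    (m : ℤ → ℕ) (hm : ∀ v, m v ≤ cB lam v) (T : Finset ℤ) (hT : ∀ v, v ∈ T ↔ 0 < m v) :
    Vcoef q lam (Jof lam m)
      = ∏ v ∈ T, ((qfact q (m v))⁻¹ * ffq q (cB lam v) (m v)) := by
  set J := Jof lam m with hJdef
  have hjmem : ∀ j : Fin n, j ∈ J ↔ (j : ℕ) < Sv lam (lam j) + m (lam j) := fun j => mem_Jof lam m j
  -- inner product for j ∈ J
  have inner : ∀ j ∈ J,
      (∏ k : Fin n, if j < k ∧ j ∈ J ∧ k ∉ J ∧ lam j = lam k then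
        (1 - q ^ ((k : ℕ) - (j : ℕ) + 1)) / (1 - q ^ ((k : ℕ) - (j : ℕ))) else 1)
      = (1 - q ^ (Sv lam (lam j) + cB lam (lam j) - (j : ℕ)))
        / (1 - q ^ (Sv lam (lam j) + m (lam j) - (j : ℕ))) := by
    intro j hj
    set v := lam j with hv
    have hjv : (j : ℕ) < Sv lam v + m v := (hjmem j).mp hj
    have hjSv : Sv lam v ≤ (j : ℕ) := ((block_iff lam hlam j v).mp rfl).1
    have step : ∀ k : Fin n,
        (if j < k ∧ j ∈ J ∧ k ∉ J ∧ lam j = lam k then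
          (1 - q ^ ((k : ℕ) - (j : ℕ) + 1)) / (1 - q ^ ((k : ℕ) - (j : ℕ))) else 1)
        = (if Sv lam v + m v ≤ (k : ℕ) ∧ (k : ℕ) < Sv lam v + cB lam v then
          (1 - q ^ ((k : ℕ) - (j : ℕ) + 1)) / (1 - q ^ ((k : ℕ) - (j : ℕ))) else 1) := by
      intro k
      congr 1
      apply propext
      constructor
      · rintro ⟨h1, h2, h3, h4⟩
        have hkv : lam k = v := h4.symm
        have hblk := (block_iff lam hlam k v).mp hkv
        have hnot : ¬ ((k : ℕ) < Sv lam (lam k) + m (lam k)) := fun hh => h3 ((hjmem k).mpr hh)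
        rw [hkv] at hnot
        exact ⟨by omega, hblk.2⟩
      · rintro ⟨h1, h2⟩
        have hkv : lam k = v := (block_iff lam hlam k v).mpr ⟨by omega, h2⟩
        refine ⟨?_, hj, ?_, hkv.symm⟩
        · rw [Fin.lt_def]; omega
        · intro hk
          have := (hjmem k).mp hk
          rw [hkv] at this
          omega
    rw [Finset.prod_congr rfl (fun k _ => step k)]
    have conv1 : (∏ k : Fin n, if Sv lam v + m v ≤ (k : ℕ) ∧ (k : ℕ) < Sv lam v + cB lam v then
          (1 - q ^ ((k : ℕ) - (j : ℕ) + 1)) / (1 - q ^ ((k : ℕ) - (j : ℕ))) else 1)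
        = ∏ x ∈ Finset.range n, (if Sv lam v + m v ≤ x ∧ x < Sv lam v + cB lam v then
          (1 - q ^ (x - (j : ℕ) + 1)) / (1 - q ^ (x - (j : ℕ))) else 1) :=
      Fin.prod_univ_eq_prod_range (fun x => if Sv lam v + m v ≤ x ∧ x < Sv lam v + cB lam v then
          (1 - q ^ (x - (j : ℕ) + 1)) / (1 - q ^ (x - (j : ℕ))) else 1) n
    rw [conv1, ← Finset.prod_filter]
    have hfe : (Finset.range n).filter
          (fun x => Sv lam v + m v ≤ x ∧ x < Sv lam v + cB lam v)
        = Finset.Ico (Sv lam v + m v) (Sv lam v + cB lam v) := by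
      ext x
      simp only [Finset.mem_filter, Finset.mem_range, Finset.mem_Ico]
      have := SvcB_le lam v
      constructor
      · rintro ⟨_, h⟩; exact h
      · rintro ⟨h1, h2⟩; exact ⟨by omega, h1, h2⟩
    rw [hfe, telescope hq0 hq1 (j : ℕ) _ _ (by omega) (by have := hm v; omega)]
  -- collapse outer product to J
  rw [Vcoef]
  rw [← Finset.prod_subset (Finset.subset_univ J) (fun j _ hj => Finset.prod_eq_one
      (fun k _ => if_neg (fun hh => hj hh.2.1)))]
  rw [Finset.prod_congr rfl inner]
  -- fiberwise over values
  have hmaps : ∀ j ∈ J, lam j ∈ T := by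
    intro j hj
    have h1 := (hjmem j).mp hj
    have h2 : Sv lam (lam j) ≤ (j : ℕ) := ((block_iff lam hlam j (lam j)).mp rfl).1
    exact (hT _).mpr (by omega)
  rw [← Finset.prod_fiberwise_of_maps_to hmaps]
  apply Finset.prod_congr rfl
  intro v hv
  -- on each fiber, replace lam j by v
  have fib1 : ∀ j ∈ J.filter (fun j => lam j = v),
      (1 - q ^ (Sv lam (lam j) + cB lam (lam j) - (j : ℕ)))
        / (1 - q ^ (Sv lam (lam j) + m (lam j) - (j : ℕ)))
      = (1 - q ^ (Sv lam v + cB lam v - (j : ℕ)))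
        / (1 - q ^ (Sv lam v + m v - (j : ℕ))) := by
    intro j hj
    rw [Finset.mem_filter] at hj
    rw [hj.2]
  rw [Finset.prod_congr rfl fib1, Jof_filter_eq lam hlam m hm v]
  have conv2 : (∏ j ∈ Finset.univ.filter
        (fun j : Fin n => Sv lam v ≤ (j : ℕ) ∧ (j : ℕ) < Sv lam v + m v),
        (1 - q ^ (Sv lam v + cB lam v - (j : ℕ))) / (1 - q ^ (Sv lam v + m v - (j : ℕ))))
      = ∏ x ∈ (Finset.range n).filter (fun x => Sv lam v ≤ x ∧ x < Sv lam v + m v),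
        (1 - q ^ (Sv lam v + cB lam v - x)) / (1 - q ^ (Sv lam v + m v - x)) := by
    rw [Finset.prod_filter, Finset.prod_filter]
    exact Fin.prod_univ_eq_prod_range (fun x => if Sv lam v ≤ x ∧ x < Sv lam v + m v then
      (1 - q ^ (Sv lam v + cB lam v - x)) / (1 - q ^ (Sv lam v + m v - x)) else 1) n
  rw [conv2]
  have hfe2 : (Finset.range n).filter (fun x => Sv lam v ≤ x ∧ x < Sv lam v + m v)
      = Finset.Ico (Sv lam v) (Sv lam v + m v) := by
    ext x
    simp only [Finset.mem_filter, Finset.mem_range, Finset.mem_Ico]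
    have := SvcB_le lam v
    have := hm v
    constructor
    · rintro ⟨_, h⟩; exact h
    · rintro ⟨h1, h2⟩; exact ⟨by omega, h1, h2⟩
  rw [hfe2, Finset.prod_Ico_eq_prod_range]
  have hw : Sv lam v + m v - Sv lam v = m v := by omega
  rw [hw]
  have fib2 : ∀ i ∈ Finset.range (m v),
      (1 - q ^ (Sv lam v + cB lam v - (Sv lam v + i)))
        / (1 - q ^ (Sv lam v + m v - (Sv lam v + i)))
      = (1 - q ^ (cB lam v - i)) / (1 - q ^ (m v - i)) := by
    intro i _
    congr 3 <;> omega
  rw [Finset.prod_congr rfl fib2, ← qbinom_eq hq0 hq1 _ _ (hm v)]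

end Coef


section Glue
variable {n : ℕ} (lam : Fin n → ℤ)

lemma count_phi (J : Finset (Fin n)) (v : ℤ) :
    (Multiset.map lam J.val).count v = (J.filter fun j => lam j = v).card := by
  rw [Multiset.count_map]
  have h1 : (J.filter fun j => lam j = v).card
      = Multiset.card (Multiset.filter (fun j => lam j = v) J.val) := rfl
  rw [h1]
  congr 1
  apply Multiset.filter_congr
  intro a _
  exact eq_comm

lemma shift_eq (J : Finset (Fin n)) (ν : Multiset ℤ)
    (hν : ∀ v, ν.count v = (J.filter fun j => lam j = v).card) :
    ν.map (· + 1) + (toM lam - ν)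
      = toM (fun k => lam k + if k ∈ J then 1 else 0) := by
  ext x
  rw [Multiset.count_add, count_map_add_one, Multiset.count_sub, hν, hν, count_toM,
    count_toM (fun k => lam k + if k ∈ J then 1 else 0) x]
  have hle : (J.filter fun j => lam j = x).card ≤ cB lam x := mJ_le_cB lam J x
  have key : cB (fun k => lam k + if k ∈ J then 1 else 0) x
        + (J.filter fun j => lam j = x).card
      = (J.filter fun j => lam j = x - 1).card + cB lam x := by
    have s1 := Finset.card_filter_add_card_filter_not
      (s := Finset.univ.filter fun k : Fin n => lam k + (if k ∈ J then 1 else 0) = x)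
      (p := fun k => k ∈ J)
    have s2 := Finset.card_filter_add_card_filter_not
      (s := Finset.univ.filter fun k : Fin n => lam k = x) (p := fun k => k ∈ J)
    have e1 : ((Finset.univ.filter fun k : Fin n =>
          lam k + (if k ∈ J then 1 else 0) = x).filter fun k => k ∈ J)
        = J.filter fun j => lam j = x - 1 := by
      ext k
      simp only [Finset.mem_filter, Finset.mem_univ, true_and]
      constructor
      · rintro ⟨h1, h2⟩; rw [if_pos h2] at h1; exact ⟨h2, by omega⟩
      · rintro ⟨h1, h2⟩; exact ⟨by rw [if_pos h1]; omega, h1⟩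
    have e2 : ((Finset.univ.filter fun k : Fin n =>
          lam k + (if k ∈ J then 1 else 0) = x).filter fun k => ¬ k ∈ J)
        = (Finset.univ.filter fun k : Fin n => lam k = x).filter fun k => ¬ k ∈ J := by
      ext k
      simp only [Finset.mem_filter, Finset.mem_univ, true_and]
      constructor
      · rintro ⟨h1, h2⟩; rw [if_neg h2] at h1; exact ⟨by omega, h2⟩
      · rintro ⟨h1, h2⟩; exact ⟨by rw [if_neg h2]; omega, h2⟩
    have e3 : ((Finset.univ.filter fun k : Fin n => lam k = x).filter fun k => k ∈ J)
        = J.filter fun j => lam j = x := by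
      ext k
      simp only [Finset.mem_filter, Finset.mem_univ, true_and]
      tauto
    rw [e1, e2] at s1
    rw [e3] at s2
    show (Finset.univ.filter fun k : Fin n => lam k + (if k ∈ J then 1 else 0) = x).card
        + (J.filter fun j => lam j = x).card
      = (J.filter fun j => lam j = x - 1).card
        + (Finset.univ.filter fun k : Fin n => lam k = x).card
    omega
  have key2 : cB lam x = (Finset.univ.filter fun k : Fin n => lam k = x).card := rfl
  omega

lemma phi_Jof (hlam : Antitone lam) (ν : Multiset ℤ) (hν : ν ≤ toM lam) :
    Multiset.map lam (Jof lam fun v => ν.count v).val = ν := by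
  have hm : ∀ v, ν.count v ≤ cB lam v := by
    intro v
    rw [← count_toM lam v]
    exact Multiset.le_iff_count.mp hν v
  ext v
  rw [count_phi, card_Jof_filter lam hlam _ hm v]

end Glue


theorem HrStar_explicit_action (q : ℝ) (hq : 0 < q) (hq1 : q < 1) (r : ℕ) (hr : 1 ≤ r)
    (n : ℕ) (lam : Fin n → ℤ) (hlam : Antitone lam) (f : Multiset ℤ → ℂ) :
    (Function.support fun ν : Multiset ℤ => HrStarTerm q r f (toM lam) ν).Finite ∧
    (∑ᶠ ν : Multiset ℤ, HrStarTerm q r f (toM lam) ν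
      = ∑ J : Finset (Fin n),
          if J.card = r ∧ Antitone (fun k => lam k + if k ∈ J then 1 else 0) then
            ((Vcoef q lam J : ℝ) : ℂ) * f (toM fun k => lam k + if k ∈ J then 1 else 0)
          else 0) ∧
    (r > n → ∑ᶠ ν : Multiset ℤ, HrStarTerm q r f (toM lam) ν = 0) := by
  classical
  have hsupp : (Function.support fun ν : Multiset ℤ => HrStarTerm q r f (toM lam) ν)
      ⊆ ↑((toM lam).powerset.toFinset) := by
    intro ν hν
    simp only [Function.mem_support] at hν
    by_contra h
    apply hν
    rw [HrStarTerm_eq, if_neg]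
    rintro ⟨-, h2⟩
    exact h (by simpa [Multiset.mem_toFinset, Multiset.mem_powerset] using h2)
  have hfin := Set.Finite.subset ((toM lam).powerset.toFinset.finite_toSet) hsupp
  have hmain : ∑ᶠ ν : Multiset ℤ, HrStarTerm q r f (toM lam) ν
      = ∑ J : Finset (Fin n),
          if J.card = r ∧ Antitone (fun k => lam k + if k ∈ J then 1 else 0) then
            ((Vcoef q lam J : ℝ) : ℂ) * f (toM fun k => lam k + if k ∈ J then 1 else 0)
          else 0 := by
    rw [finsum_eq_sum_of_support_subset _ hsupp]
    rw [Finset.sum_congr rfl fun ν _ => HrStarTerm_eq q r f (toM lam) ν, ← Finset.sum_filter]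
    have hrhs : (∑ J : Finset (Fin n),
          if J.card = r ∧ Antitone (fun k => lam k + if k ∈ J then 1 else 0) then
            ((Vcoef q lam J : ℝ) : ℂ) * f (toM fun k => lam k + if k ∈ J then 1 else 0)
          else 0)
        = ∑ J ∈ Finset.univ.filter (fun J : Finset (Fin n) =>
            J.card = r ∧ Antitone (fun k => lam k + if k ∈ J then 1 else 0)),
            ((Vcoef q lam J : ℝ) : ℂ) * f (toM fun k => lam k + if k ∈ J then 1 else 0) :=
      (Finset.sum_filter _ _).symm
    rw [hrhs]
    apply Finset.sum_nbij' (i := fun ν : Multiset ℤ => Jof lam fun v => ν.count v)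
      (j := fun J : Finset (Fin n) => Multiset.map lam J.val)
    · intro ν hν
      rw [Finset.mem_filter, Multiset.mem_toFinset, Multiset.mem_powerset] at hν
      obtain ⟨hle, hcard, -⟩ := hν
      have hm : ∀ v, ν.count v ≤ cB lam v := by
        intro v
        rw [← count_toM lam v]
        exact Multiset.le_iff_count.mp hle v
      rw [Finset.mem_filter]
      refine ⟨Finset.mem_univ _, ?_, antitone_Jof lam hlam _ hm⟩
      have hφ := phi_Jof lam hlam ν hle
      calc (Jof lam fun v => ν.count v).card
          = Multiset.card (Multiset.map lam (Jof lam fun v => ν.count v).val) := by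
            rw [Multiset.card_map]; rfl
        _ = Multiset.card ν := by rw [hφ]
        _ = r := hcard
    · intro J hJ
      rw [Finset.mem_filter] at hJ
      obtain ⟨-, hcard, hant⟩ := hJ
      rw [Finset.mem_filter, Multiset.mem_toFinset, Multiset.mem_powerset]
      have hle : Multiset.map lam J.val ≤ toM lam :=
        Multiset.map_le_map (Finset.val_le_iff.mpr (Finset.subset_univ J))
      refine ⟨hle, ?_, hle⟩
      rw [Multiset.card_map]
      exact hcard
    · intro ν hν
      rw [Finset.mem_filter, Multiset.mem_toFinset, Multiset.mem_powerset] at hν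
      exact phi_Jof lam hlam ν hν.1
    · intro J hJ
      rw [Finset.mem_filter] at hJ
      have h1 : (fun v => (Multiset.map lam J.val).count v)
          = fun v => (J.filter fun j => lam j = v).card := funext fun v => count_phi lam J v
      rw [h1, ← J_eq_Jof lam hlam J hJ.2.2]
    · intro ν hν
      rw [Finset.mem_filter, Multiset.mem_toFinset, Multiset.mem_powerset] at hν
      obtain ⟨hle, hcard, -⟩ := hν
      have hm : ∀ v, ν.count v ≤ cB lam v := by
        intro v
        rw [← count_toM lam v]
        exact Multiset.le_iff_count.mp hle v
      have harg : ν.map (· + 1) + (toM lam - ν)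
          = toM (fun k => lam k + if k ∈ Jof lam (fun v => ν.count v) then 1 else 0) :=
        shift_eq lam _ ν (fun v => (card_Jof_filter lam hlam _ hm v).symm)
      have hcoef : (∏ v ∈ ν.toFinset,
            (qfact q (ν.count v))⁻¹ * ffq q ((toM lam).count v) (ν.count v))
          = Vcoef q lam (Jof lam fun v => ν.count v) := by
        rw [Vcoef_eq hq hq1 lam hlam _ hm ν.toFinset
          (fun v => Multiset.mem_toFinset.trans Multiset.count_pos.symm)]
        apply Finset.prod_congr rfl
        intro v _
        rw [count_toM]
      rw [harg, ← hcoef]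
  refine ⟨hfin, hmain, ?_⟩
  intro hrn
  rw [hmain]
  apply Finset.sum_eq_zero
  intro J _
  rw [if_neg]
  rintro ⟨h1, -⟩
  have hcle : J.card ≤ n := le_trans (Finset.card_le_univ J) (by simp)
  omega
end

section
/- Pieri identity for Hall-Littlewood functions: for ξ in the open alcove π > ξ_1 > ... > ξ_n > -π, λ ∈ Λ_n, and 1 ≤ r ≤ n, one has e_r(e^{iξ_1},...,e^{iξ_n}) φ_ξ(λ) = Σ_J V_{λ,J} φ_ξ(λ + e_J), the sum over subsets J ⊆ {1,...,n} with |J| = r such that λ + e_J is weakly decreasing, where e_r is the r-th elementary symmetric polynomial, V_{λ,J} := Π_{j<k, j∈J, k∉J, λ_j=λ_k} (1-q^{k-j+1})/(1-q^{k-j}), and φ_ξ(λ) := Σ_{σ∈S_n} C(ξ_σ) e^{iλ·ξ_σ} with C(ξ) = Π_{j<k} (1-q e^{i(ξ_k-ξ_j)})/(1-e^{i(ξ_k-ξ_j)}). -/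
open Complex
open scoped Classical

noncomputable def Cfun (q : ℝ) {n : ℕ} (xi : Fin n → ℝ) : ℂ :=
  ∏ j : Fin n, ∏ k : Fin n,
    if j < k then
      (1 - (q : ℂ) * exp (I * ((xi k : ℂ) - (xi j : ℂ))))
        / (1 - exp (I * ((xi k : ℂ) - (xi j : ℂ)))) else 1

/-- The `n`-variable Hall–Littlewood function `φ_ξ(λ) = Σ_{σ ∈ S_n} C(ξ_σ) e^{i λ·ξ_σ}`. -/
noncomputable def hallLittlewood (q : ℝ) {n : ℕ} (xi : Fin n → ℝ) (lam : Fin n → ℤ) : ℂ :=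
  ∑ σ : Equiv.Perm (Fin n),
    Cfun q (xi ∘ σ) * exp (I * ∑ j : Fin n, (lam j : ℂ) * (xi (σ j) : ℂ))

open Finset

noncomputable def gfac (q : ℝ) (x y : ℝ) : ℂ :=
  (1 - (q : ℂ) * exp (I * ((x : ℂ) - (y : ℂ)))) / (1 - exp (I * ((x : ℂ) - (y : ℂ))))

lemma exp_inj {n} (xi : Fin n → ℝ) (hxi : StrictAnti xi)
    (hU : ∀ j, xi j < Real.pi) (hL : ∀ j, -Real.pi < xi j) :
    Function.Injective fun j => exp (I * (xi j : ℂ)) := by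
  intro j k hjk
  obtain ⟨m, hm⟩ := Complex.exp_eq_exp_iff_exists_int.mp hjk
  have h2 : (I : ℂ) * (xi j) = I * ((xi k : ℂ) + m * (2 * Real.pi)) := by rw [hm]; ring
  have h3 := mul_left_cancel₀ I_ne_zero h2
  have h4 : (xi j : ℝ) = xi k + m * (2 * Real.pi) := by exact_mod_cast h3
  have hπ := Real.pi_pos
  have h6 : -1 < (m : ℝ) := by nlinarith [hU j, hL j, hU k, hL k]
  have h7 : (m : ℝ) < 1 := by nlinarith [hU j, hL j, hU k, hL k]
  have hm0 : m = 0 := by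
    have : (-1 : ℤ) < m ∧ m < 1 := by exact_mod_cast And.intro h6 h7
    omega
  apply hxi.injective
  rw [h4, hm0]; push_cast; ring

abbrev pairsLT (n : ℕ) : Finset (Fin n × Fin n) :=
  (univ ×ˢ univ).filter (fun p => p.1 < p.2)

lemma Cfun_eq_pairs (q : ℝ) {n : ℕ} (w : Fin n → ℝ) :
    Cfun q w = ∏ p ∈ pairsLT n, gfac q (w p.2) (w p.1) := by
  rw [Finset.prod_filter,
    Finset.prod_product' (f := fun j k : Fin n => if j < k then gfac q (w k) (w j) else 1)]
  rfl

lemma swap_adj_lt {n} {i i' j k : Fin n} (h : (i' : ℕ) = (i : ℕ) + 1)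
    (hjk : j < k) (hne : ¬(j = i ∧ k = i')) :
    Equiv.swap i i' j < Equiv.swap i i' k := by
  rw [Fin.lt_def] at hjk ⊢
  rw [Equiv.swap_apply_def, Equiv.swap_apply_def]
  by_cases e1 : j = i <;> by_cases e2 : j = i' <;> by_cases e3 : k = i <;> by_cases e4 : k = i' <;>
      simp only [e1, e2, e3, e4, if_true, if_false, if_pos, if_neg] <;>
    simp_all [Fin.ext_iff] <;> omega

lemma Cfun_swap (q : ℝ) {n} (w : Fin n → ℝ) {i i' : Fin n} (h : (i' : ℕ) = (i : ℕ) + 1) :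
    Cfun q (w ∘ Equiv.swap i i') * gfac q (w i') (w i)
      = Cfun q w * gfac q (w i) (w i') := by
  classical
  have hii : i < i' := by rw [Fin.lt_def]; omega
  have hmem : (i, i') ∈ pairsLT n := by simp [pairsLT, hii]
  rw [Cfun_eq_pairs, Cfun_eq_pairs]
  rw [← Finset.prod_erase_mul _ _ hmem, ← Finset.prod_erase_mul _ _ hmem]
  have hswapii : (w ∘ Equiv.swap i i') (i, i').2 = w i := by
    simp [Equiv.swap_apply_right]
  have hswapii' : (w ∘ Equiv.swap i i') (i, i').1 = w i' := by
    simp [Equiv.swap_apply_left]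
  have key : ∏ p ∈ (pairsLT n).erase (i, i'), gfac q ((w ∘ Equiv.swap i i') p.2) ((w ∘ Equiv.swap i i') p.1)
      = ∏ p ∈ (pairsLT n).erase (i, i'), gfac q (w p.2) (w p.1) := by
    apply Finset.prod_bij' (fun p _ => (Equiv.swap i i' p.1, Equiv.swap i i' p.2))
      (fun p _ => (Equiv.swap i i' p.1, Equiv.swap i i' p.2))
    · intro p hp
      rw [Finset.mem_erase] at hp ⊢
      obtain ⟨hp1, hp2⟩ := hp
      rw [Finset.mem_filter] at hp2 ⊢
      refine ⟨?_, by simp, ?_⟩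
      · intro hcon
        have h1 : Equiv.swap i i' p.1 = i := congrArg Prod.fst hcon
        have h2 : Equiv.swap i i' p.2 = i' := congrArg Prod.snd hcon
        have h1' : p.1 = i' := by
          have := congrArg (Equiv.swap i i') h1
          simpa [Equiv.swap_apply_right] using this
        have h2' : p.2 = i := by
          have := congrArg (Equiv.swap i i') h2
          simpa [Equiv.swap_apply_left] using this
        have := hp2.2
        rw [h1', h2'] at this
        exact absurd (lt_trans this hii) (lt_irrefl _)
      · apply swap_adj_lt h hp2.2
        intro ⟨ha, hb⟩
        exact hp1 (by rw [Prod.ext_iff]; exact ⟨ha, hb⟩)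
    · intro p hp
      rw [Finset.mem_erase] at hp ⊢
      obtain ⟨hp1, hp2⟩ := hp
      rw [Finset.mem_filter] at hp2 ⊢
      refine ⟨?_, by simp, ?_⟩
      · intro hcon
        have h1 : Equiv.swap i i' p.1 = i := congrArg Prod.fst hcon
        have h2 : Equiv.swap i i' p.2 = i' := congrArg Prod.snd hcon
        have h1' : p.1 = i' := by
          have := congrArg (Equiv.swap i i') h1
          simpa [Equiv.swap_apply_right] using this
        have h2' : p.2 = i := by
          have := congrArg (Equiv.swap i i') h2
          simpa [Equiv.swap_apply_left] using this
        have := hp2.2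
        rw [h1', h2'] at this
        exact absurd (lt_trans this hii) (lt_irrefl _)
      · apply swap_adj_lt h hp2.2
        intro ⟨ha, hb⟩
        exact hp1 (by rw [Prod.ext_iff]; exact ⟨ha, hb⟩)
    · intro p hp; simp
    · intro p hp; simp
    · intro p hp; simp
  rw [key, hswapii, hswapii']
  ring

lemma straighten (q : ℝ) {n} (xi : Fin n → ℝ)
    (hz : Function.Injective fun j => exp (I * (xi j : ℂ)))
    (mu : Fin n → ℤ) {i i' : Fin n} (h : (i' : ℕ) = (i : ℕ) + 1) (hmu : mu i' = mu i + 1) :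
    hallLittlewood q xi mu = q * hallLittlewood q xi (mu ∘ Equiv.swap i i') := by
  classical
  set s := Equiv.swap i i' with hs
  have hine : i ≠ i' := by
    intro e; rw [e] at h; omega
  set t : (Fin n → ℤ) → Equiv.Perm (Fin n) → ℂ :=
    fun μ σ => Cfun q (xi ∘ σ) * exp (I * ∑ j : Fin n, (μ j : ℂ) * (xi (σ j) : ℂ)) with ht
  have hsum : ∀ μ : Fin n → ℤ, hallLittlewood q xi μ = ∑ σ : Equiv.Perm (Fin n), t μ σ :=
    fun μ => rfl
  have hre : ∀ μ : Fin n → ℤ,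
      (∑ σ : Equiv.Perm (Fin n), t μ σ) = ∑ σ : Equiv.Perm (Fin n), t μ (σ * s) := by
    intro μ
    exact (Equiv.sum_comp (Equiv.mulRight s) (t μ)).symm
  have key : ∀ σ : Equiv.Perm (Fin n),
      t mu σ + t mu (σ * s) = q * (t (mu ∘ s) σ + t (mu ∘ s) (σ * s)) := by
    intro σ
    set a := exp (I * (xi (σ i) : ℂ)) with hadef
    set b := exp (I * (xi (σ i') : ℂ)) with hbdef
    set A := Cfun q (xi ∘ σ) with hA
    set B := Cfun q (xi ∘ (σ * s)) with hB
    set ν : Fin n → ℤ := fun j => if j = i' then mu i else mu j with hν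
    set E0 := exp (I * ∑ j : Fin n, (ν j : ℂ) * (xi (σ j) : ℂ)) with hE0
    have hνs : ∀ j, ν (s j) = ν j := by
      intro j
      by_cases h1 : j = i
      · subst h1; simp [hν, s, Equiv.swap_apply_left, hine, hine.symm]
      · by_cases h2 : j = i'
        · subst h2; simp [hν, s, Equiv.swap_apply_right, hine, hine.symm]
        · simp [hν, s, Equiv.swap_apply_of_ne_of_ne h1 h2, h1, h2]
    have hsplit1 : ∀ τ : Equiv.Perm (Fin n),
        (∑ j : Fin n, (mu j : ℂ) * (xi (τ j) : ℂ))
          = (∑ j : Fin n, (ν j : ℂ) * (xi (τ j) : ℂ)) + xi (τ i') := by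
      intro τ
      have : ∀ j : Fin n, (mu j : ℂ) * (xi (τ j) : ℂ)
          = (ν j : ℂ) * (xi (τ j) : ℂ) + (if j = i' then (xi (τ i') : ℂ) else 0) := by
        intro j
        by_cases hj : j = i'
        · subst hj; simp only [hν, if_pos rfl, hmu]; push_cast; ring
        · simp [hν, hj]
      rw [Finset.sum_congr rfl (fun j _ => this j), Finset.sum_add_distrib]
      simp
    have hsplit2 : ∀ τ : Equiv.Perm (Fin n),
        (∑ j : Fin n, ((mu ∘ s) j : ℂ) * (xi (τ j) : ℂ))
          = (∑ j : Fin n, (ν j : ℂ) * (xi (τ j) : ℂ)) + xi (τ i) := by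
      intro τ
      have : ∀ j : Fin n, ((mu ∘ s) j : ℂ) * (xi (τ j) : ℂ)
          = (ν j : ℂ) * (xi (τ j) : ℂ) + (if j = i then (xi (τ i) : ℂ) else 0) := by
        intro j
        by_cases hj : j = i
        · subst hj
          simp only [Function.comp, s, Equiv.swap_apply_left, hν, if_pos rfl,
            if_neg hine, hmu]
          push_cast; ring
        · by_cases hj' : j = i'
          · subst hj'
            simp [Function.comp, s, Equiv.swap_apply_right, hν, hj]
          · simp [Function.comp, s, Equiv.swap_apply_of_ne_of_ne hj hj', hν, hj, hj']
      rw [Finset.sum_congr rfl (fun j _ => this j), Finset.sum_add_distrib]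
      simp
    have hnusum : (∑ j : Fin n, (ν j : ℂ) * (xi ((σ * s) j) : ℂ))
        = ∑ j : Fin n, (ν j : ℂ) * (xi (σ j) : ℂ) := by
      calc (∑ j : Fin n, (ν j : ℂ) * (xi ((σ * s) j) : ℂ))
          = ∑ j : Fin n, (ν (s j) : ℂ) * (xi (σ (s j)) : ℂ) := by
            apply Finset.sum_congr rfl; intro j _; rw [hνs, Equiv.Perm.mul_apply]
        _ = ∑ j : Fin n, (ν j : ℂ) * (xi (σ j) : ℂ) :=
            Equiv.sum_comp s (fun j => (ν j : ℂ) * (xi (σ j) : ℂ))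
    have he1 : exp (I * ∑ j : Fin n, (mu j : ℂ) * (xi (σ j) : ℂ)) = E0 * b := by
      rw [hsplit1 σ, mul_add, exp_add]
    have he2 : exp (I * ∑ j : Fin n, (mu j : ℂ) * (xi ((σ * s) j) : ℂ)) = E0 * a := by
      rw [hsplit1 (σ * s), hnusum, mul_add, exp_add]
      have : (σ * s) i' = σ i := by
        rw [Equiv.Perm.mul_apply]; simp [s, Equiv.swap_apply_right]
      rw [this]
    have he3 : exp (I * ∑ j : Fin n, ((mu ∘ s) j : ℂ) * (xi (σ j) : ℂ)) = E0 * a := by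
      rw [hsplit2 σ, mul_add, exp_add]
    have he4 : exp (I * ∑ j : Fin n, ((mu ∘ s) j : ℂ) * (xi ((σ * s) j) : ℂ)) = E0 * b := by
      rw [hsplit2 (σ * s), hnusum, mul_add, exp_add]
      have : (σ * s) i = σ i' := by
        rw [Equiv.Perm.mul_apply]; simp [s, Equiv.swap_apply_left]
      rw [this]
    have hBA : B * ((1 - (q : ℂ) * (b / a)) / (1 - b / a))
        = A * ((1 - (q : ℂ) * (a / b)) / (1 - a / b)) := by
      have hcomp : (xi ∘ σ) ∘ (Equiv.swap i i') = xi ∘ (σ * s) := by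
        funext j; simp [Function.comp, s, Equiv.Perm.mul_apply]
      have := Cfun_swap q (xi ∘ σ) h
      rw [hcomp] at this
      have hg1 : gfac q ((xi ∘ σ) i') ((xi ∘ σ) i) = (1 - (q : ℂ) * (b / a)) / (1 - b / a) := by
        rw [gfac, hadef, hbdef]
        rw [show I * ((((xi ∘ σ) i' : ℝ) : ℂ) - (((xi ∘ σ) i : ℝ) : ℂ))
            = I * ((xi (σ i') : ℂ)) - I * ((xi (σ i) : ℂ)) by simp [Function.comp]; ring,
          exp_sub]
      have hg2 : gfac q ((xi ∘ σ) i) ((xi ∘ σ) i') = (1 - (q : ℂ) * (a / b)) / (1 - a / b) := by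
        rw [gfac, hadef, hbdef]
        rw [show I * ((((xi ∘ σ) i : ℝ) : ℂ) - (((xi ∘ σ) i' : ℝ) : ℂ))
            = I * ((xi (σ i) : ℂ)) - I * ((xi (σ i') : ℂ)) by simp [Function.comp]; ring,
          exp_sub]
      rw [hg1, hg2] at this
      exact this
    have ha0 : a ≠ 0 := exp_ne_zero _
    have hb0 : b ≠ 0 := exp_ne_zero _
    have hab : a ≠ b := by
      intro e
      exact hine (σ.injective (hz e))
    have h1 : (1 : ℂ) - b / a ≠ 0 := by
      rw [sub_ne_zero]
      intro e
      rw [eq_comm, div_eq_one_iff_eq ha0] at e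
      exact hab e.symm
    have h2 : (1 : ℂ) - a / b ≠ 0 := by
      rw [sub_ne_zero]
      intro e
      rw [eq_comm, div_eq_one_iff_eq hb0] at e
      exact hab e
    have hq2 : A * b + B * a = q * (A * a + B * b) := by
      have hab1 : a - b ≠ 0 := sub_ne_zero.mpr hab
      have hab2 : b - a ≠ 0 := sub_ne_zero.mpr (Ne.symm hab)
      have h3 : (b - a) * (A * (b - q * a) + B * (a - q * b)) = 0 := by
        field_simp at hBA
        linear_combination hBA
      rcases mul_eq_zero.mp h3 with h4 | h4
      · exact absurd (by linear_combination -h4) hab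
      · linear_combination h4
    simp only [ht]
    rw [he1, he2, he3, he4]
    have hcomp2 : xi ∘ σ = xi ∘ (σ * s * s) := by
      funext j
      simp [s, Equiv.Perm.mul_apply]
    linear_combination E0 * hq2
  have h2 : hallLittlewood q xi mu + hallLittlewood q xi mu
      = q * (hallLittlewood q xi (mu ∘ s) + hallLittlewood q xi (mu ∘ s)) := by
    calc hallLittlewood q xi mu + hallLittlewood q xi mu
        = (∑ σ : Equiv.Perm (Fin n), t mu σ) + ∑ σ : Equiv.Perm (Fin n), t mu (σ * s) := by
          rw [hsum, ← hre]
      _ = ∑ σ : Equiv.Perm (Fin n), (t mu σ + t mu (σ * s)) := by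
          rw [Finset.sum_add_distrib]
      _ = ∑ σ : Equiv.Perm (Fin n), q * (t (mu ∘ s) σ + t (mu ∘ s) (σ * s)) := by
          exact Finset.sum_congr rfl fun σ _ => key σ
      _ = q * ((∑ σ : Equiv.Perm (Fin n), t (mu ∘ s) σ) + ∑ σ : Equiv.Perm (Fin n), t (mu ∘ s) (σ * s)) := by
          rw [← Finset.mul_sum, Finset.sum_add_distrib]
      _ = q * (hallLittlewood q xi (mu ∘ s) + hallLittlewood q xi (mu ∘ s)) := by
          rw [← hre, ← hsum]
  have := h2
  have h4 : (2 : ℂ) * hallLittlewood q xi mu = (2 : ℂ) * (q * hallLittlewood q xi (mu ∘ s)) := by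
    linear_combination this
  exact mul_left_cancel₀ two_ne_zero h4

section Comb

variable {n : ℕ}

/-- `λ + 1_J`. -/
def indJ (lam : Fin n → ℤ) (J : Finset (Fin n)) : Fin n → ℤ :=
  fun k => lam k + if k ∈ J then 1 else 0

/-- fiber of value `v`. -/
noncomputable def fib (lam : Fin n → ℤ) (v : ℤ) : Finset (Fin n) :=
  univ.filter (fun k => lam k = v)

noncomputable def cnt (lam : Fin n → ℤ) (J : Finset (Fin n)) (v : ℤ) : ℕ :=
  (J.filter (fun j => lam j = v)).card

noncomputable def rk (lam : Fin n → ℤ) (j : Fin n) : ℕ :=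
  ((fib lam (lam j)).filter (fun k => k < j)).card

noncomputable def srt (lam : Fin n → ℤ) (J : Finset (Fin n)) : Finset (Fin n) :=
  univ.filter (fun j => rk lam j < cnt lam J (lam j))

noncomputable def PF (lam : Fin n → ℤ) (J : Finset (Fin n)) : Finset (Fin n × Fin n) :=
  (univ ×ˢ univ).filter
    (fun p => p.1 < p.2 ∧ lam p.1 = lam p.2 ∧ p.1 ∉ J ∧ p.2 ∈ J)

noncomputable def Nv (lam : Fin n → ℤ) (J : Finset (Fin n)) : ℕ := (PF lam J).card

def dc (lam : Fin n → ℤ) (J : Finset (Fin n)) : Prop :=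
  ∀ j k : Fin n, j < k → lam j = lam k → k ∈ J → j ∈ J

/- generic rank lemmas -/

lemma rank_lt_card {α : Type*} [LinearOrder α] (B : Finset α) {j : α} (hj : j ∈ B) :
    (B.filter (· < j)).card < B.card := by
  classical
  have hsub : B.filter (· < j) ⊆ B.erase j := by
    intro x hx
    rw [Finset.mem_filter] at hx
    rw [Finset.mem_erase]
    exact ⟨ne_of_lt hx.2, hx.1⟩
  calc (B.filter (· < j)).card ≤ (B.erase j).card := Finset.card_le_card hsub
    _ < B.card := Finset.card_erase_lt_of_mem hj

lemma rank_strictMono {α : Type*} [LinearOrder α] (B : Finset α) {j k : α}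
    (hj : j ∈ B) (hjk : j < k) :
    (B.filter (· < j)).card < (B.filter (· < k)).card := by
  classical
  apply Finset.card_lt_card
  rw [Finset.ssubset_iff_of_subset]
  · exact ⟨j, Finset.mem_filter.mpr ⟨hj, hjk⟩, fun hcon => by
      rw [Finset.mem_filter] at hcon; exact absurd hcon.2 (lt_irrefl j)⟩
  · intro x hx
    rw [Finset.mem_filter] at hx ⊢
    exact ⟨hx.1, lt_trans hx.2 hjk⟩

lemma rank_inj {α : Type*} [LinearOrder α] (B : Finset α) {j k : α}
    (hj : j ∈ B) (hk : k ∈ B) (he : (B.filter (· < j)).card = (B.filter (· < k)).card) :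
    j = k := by
  rcases lt_trichotomy j k with h | h | h
  · exact absurd he (ne_of_lt (rank_strictMono B hj h))
  · exact h
  · exact absurd he.symm (ne_of_lt (rank_strictMono B hk h))

lemma rank_surj {α : Type*} [LinearOrder α] (B : Finset α) {t : ℕ} (ht : t < B.card) :
    ∃ j ∈ B, (B.filter (· < j)).card = t := by
  classical
  have hsurj := Finset.surj_on_of_inj_on_of_card_le
    (s := B) (t := Finset.range B.card)
    (fun j _ => (B.filter (· < j)).card)
    (fun j hj => Finset.mem_range.mpr (rank_lt_card B hj))
    (fun j k hj hk he => rank_inj B hj hk he)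
    (by rw [Finset.card_range])
  obtain ⟨j, hj, hjt⟩ := hsurj t (Finset.mem_range.mpr ht)
  exact ⟨j, hj, hjt.symm⟩

lemma rank_filter_card {α : Type*} [LinearOrder α] (B : Finset α) {s : ℕ} (hs : s ≤ B.card) :
    (B.filter (fun j => (B.filter (· < j)).card < s)).card = s := by
  classical
  have hcb := Finset.card_bij (s := B.filter (fun j => (B.filter (· < j)).card < s))
    (t := Finset.range s) (fun j _ => (B.filter (· < j)).card) ?_ ?_ ?_
  · rw [Finset.card_range] at hcb; exact hcb
  · intro a ha
    rw [Finset.mem_filter] at ha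
    exact Finset.mem_range.mpr ha.2
  · intro a ha b hb he
    rw [Finset.mem_filter] at ha hb
    exact rank_inj B ha.1 hb.1 he
  · intro t ht
    rw [Finset.mem_range] at ht
    obtain ⟨j, hj, hjt⟩ := rank_surj B (lt_of_lt_of_le ht hs)
    exact ⟨j, Finset.mem_filter.mpr ⟨hj, by rw [hjt]; exact ht⟩, hjt⟩

/- lemmas about cnt, srt -/

variable {lam : Fin n → ℤ}

lemma cnt_le_card_fib (J : Finset (Fin n)) (v : ℤ) : cnt lam J v ≤ (fib lam v).card := by
  apply Finset.card_le_card
  intro j hj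
  rw [Finset.mem_filter] at hj
  rw [fib, Finset.mem_filter]
  exact ⟨Finset.mem_univ j, hj.2⟩

lemma mem_srt_iff {J : Finset (Fin n)} {j : Fin n} :
    j ∈ srt lam J ↔ rk lam j < cnt lam J (lam j) := by
  rw [srt, Finset.mem_filter]
  simp

lemma rk_eq_of_val {j : Fin n} {v : ℤ} (hv : lam j = v) :
    rk lam j = ((fib lam v).filter (· < j)).card := by
  rw [rk, hv]

lemma srt_filter_eq (J : Finset (Fin n)) (v : ℤ) :
    (srt lam J).filter (fun j => lam j = v)
      = (fib lam v).filter (fun j => ((fib lam v).filter (· < j)).card < cnt lam J v) := by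
  ext j
  rw [Finset.mem_filter, Finset.mem_filter]
  by_cases hv : lam j = v
  · simp only [Finset.mem_filter, mem_srt_iff, fib, Finset.mem_univ, true_and, hv,
      rk_eq_of_val hv, and_true, iff_true_intro trivial]
    try tauto
  · simp only [Finset.mem_filter, mem_srt_iff, fib, Finset.mem_univ, true_and, hv]
    tauto

lemma cnt_srt (J : Finset (Fin n)) (v : ℤ) : cnt lam (srt lam J) v = cnt lam J v := by
  rw [cnt, srt_filter_eq]
  exact rank_filter_card (fib lam v) (cnt_le_card_fib J v)

lemma card_eq_sum_cnt (J : Finset (Fin n)) :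
    J.card = ∑ v ∈ Finset.univ.image lam, cnt lam J v := by
  exact Finset.card_eq_sum_card_fiberwise
    (fun j hj => Finset.mem_image.mpr ⟨j, Finset.mem_univ j, rfl⟩)

lemma card_srt (J : Finset (Fin n)) : (srt lam J).card = J.card := by
  rw [card_eq_sum_cnt, card_eq_sum_cnt (J := J)]
  exact Finset.sum_congr rfl fun v _ => cnt_srt J v

lemma dc_srt (J : Finset (Fin n)) : dc lam (srt lam J) := by
  intro j k hjk hv hk
  rw [mem_srt_iff] at hk ⊢
  have hjf : j ∈ fib lam (lam j) := by rw [fib, Finset.mem_filter]; simp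
  have : rk lam j < rk lam k := by
    rw [rk_eq_of_val (hv.symm ▸ rfl : lam j = lam j), rk_eq_of_val hv.symm]
    exact rank_strictMono (fib lam (lam j)) hjf hjk
  calc rk lam j < rk lam k := this
    _ ≤ cnt lam J (lam j) := by rw [hv]; omega
  
lemma srt_eq_of_cnt_eq {J J' : Finset (Fin n)} (h : ∀ v, cnt lam J v = cnt lam J' v) :
    srt lam J = srt lam J' := by
  ext j
  rw [mem_srt_iff, mem_srt_iff, h]

lemma nv_zero_iff_dc (J : Finset (Fin n)) : Nv lam J = 0 ↔ dc lam J := by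
  rw [Nv, Finset.card_eq_zero]
  constructor
  · intro h j k hjk hv hk
    by_contra hj
    have : (j, k) ∈ PF lam J := by
      rw [PF, Finset.mem_filter]
      exact ⟨by simp, hjk, hv, hj, hk⟩
    rw [h] at this
    exact absurd this (Finset.notMem_empty _)
  · intro h
    rw [Finset.eq_empty_iff_forall_notMem]
    intro p hp
    rw [PF, Finset.mem_filter] at hp
    exact hp.2.2.2.1 (h p.1 p.2 hp.2.1 hp.2.2.1 hp.2.2.2.2)

lemma srt_of_dc {J : Finset (Fin n)} (h : dc lam J) : srt lam J = J := by
  ext j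
  rw [mem_srt_iff]
  constructor
  · intro h1
    by_contra hj
    have hsub : J.filter (fun k => lam k = lam j) ⊆ (fib lam (lam j)).filter (· < j) := by
      intro k hk
      rw [Finset.mem_filter] at hk
      rw [Finset.mem_filter, fib, Finset.mem_filter]
      refine ⟨⟨Finset.mem_univ k, hk.2⟩, ?_⟩
      rcases lt_trichotomy k j with hlt | heq | hgt
      · exact hlt
      · exact absurd (heq ▸ hk.1) hj
      · exact absurd (h j k hgt hk.2.symm hk.1) hj
    have := Finset.card_le_card hsub
    rw [rk_eq_of_val rfl] at h1
    rw [cnt] at h1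
    omega
  · intro hj
    have hsub : (fib lam (lam j)).filter (· < j) ⊂ J.filter (fun k => lam k = lam j) := by
      rw [Finset.ssubset_iff_of_subset]
      · exact ⟨j, Finset.mem_filter.mpr ⟨hj, rfl⟩, fun hcon => by
          rw [Finset.mem_filter] at hcon
          exact absurd hcon.2 (lt_irrefl j)⟩
      · intro k hk
        rw [Finset.mem_filter, fib, Finset.mem_filter] at hk
        rw [Finset.mem_filter]
        exact ⟨h k j hk.2 hk.1.2 hj, hk.1.2⟩
    have := Finset.card_lt_card hsub
    rw [rk_eq_of_val rfl, cnt]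
    omega

lemma dc_iff_antitone (hlam : Antitone lam) (J : Finset (Fin n)) :
    dc lam J ↔ Antitone (indJ lam J) := by
  constructor
  · intro h j k hjk
    rcases eq_or_lt_of_le hjk with rfl | hlt
    · exact le_refl _
    have hle : lam k ≤ lam j := hlam hjk
    rcases eq_or_lt_of_le hle with heq | hstrict
    · have hJk : k ∈ J → j ∈ J := h j k hlt heq.symm
      simp only [indJ]
      by_cases hk : k ∈ J
      · simp [hk, hJk hk, heq]
      · simp only [hk, if_neg, if_false]
        split <;> omega
    · simp only [indJ]
      split <;> split <;> omega
  · intro h j k hjk hv hk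
    by_contra hj
    have h2 := h (le_of_lt hjk)
    simp only [indJ, if_pos hk, if_neg hj] at h2
    rw [hv] at h2
    omega

lemma dc_of_adm (hlam : Antitone lam) {J : Finset (Fin n)}
    (h : Antitone (indJ lam J)) : dc lam J := (dc_iff_antitone hlam J).mpr h

/- adjacent violations -/

lemma exists_adj_violation (hlam : Antitone lam) {J : Finset (Fin n)} (h : ¬ dc lam J) :
    ∃ i i' : Fin n, (i' : ℕ) = (i : ℕ) + 1 ∧ lam i = lam i' ∧ i ∉ J ∧ i' ∈ J := by
  rw [dc] at h
  push_neg at h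
  obtain ⟨j, k, hjk, hv, hk, hj⟩ := h
  have main : ∀ d : ℕ, ∀ j k : Fin n, (k : ℕ) - (j : ℕ) ≤ d → j < k → lam j = lam k →
      j ∉ J → k ∈ J →
      ∃ i i' : Fin n, (i' : ℕ) = (i : ℕ) + 1 ∧ lam i = lam i' ∧ i ∉ J ∧ i' ∈ J := by
    intro d
    induction d with
    | zero =>
      intro j k hd hjk _ _ _
      rw [Fin.lt_def] at hjk
      omega
    | succ d ih =>
      intro j k hd hjk hv hj hk
      have hjkv : (j : ℕ) < (k : ℕ) := hjk
      have hj1n : (j : ℕ) + 1 < n := lt_of_le_of_lt hjkv k.isLt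
      set j1 : Fin n := ⟨(j : ℕ) + 1, hj1n⟩ with hj1
      have hjj1 : j < j1 := by rw [Fin.lt_def]; simp [hj1]
      have hj1k : j1 ≤ k := by rw [Fin.le_def]; simp [hj1]; omega
      have hvj1 : lam j = lam j1 := by
        have h1 : lam j1 ≤ lam j := hlam (le_of_lt hjj1)
        have h2 : lam k ≤ lam j1 := hlam hj1k
        omega
      by_cases hj1J : j1 ∈ J
      · exact ⟨j, j1, by simp [hj1], hvj1, hj, hj1J⟩
      · rcases eq_or_lt_of_le hj1k with heq | hlt2
        · rw [heq] at hj1J; exact absurd hk hj1J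
        · exact ih j1 k (by simp [hj1]; omega) hlt2 (by omega) hj1J hk
  exact main ((k : ℕ) - (j : ℕ)) j k le_rfl hjk hv hj hk

end Comb

section SwapSet

variable {n : ℕ} {lam : Fin n → ℤ} {J : Finset (Fin n)} {i i' : Fin n}

def swapSet (J : Finset (Fin n)) (i i' : Fin n) : Finset (Fin n) := insert i (J.erase i')

variable (hadj : (i' : ℕ) = (i : ℕ) + 1) (hv : lam i = lam i') (hiJ : i ∉ J) (hi'J : i' ∈ J)

include hadj in
lemma adj_ne : i ≠ i' := by
  intro e; rw [e] at hadj; omega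

include hv in
lemma lam_swap_eq : ∀ j, lam (Equiv.swap i i' j) = lam j := by
  intro j
  rcases eq_or_ne j i with rfl | h1
  · rw [Equiv.swap_apply_left]; exact hv.symm
  rcases eq_or_ne j i' with rfl | h2
  · rw [Equiv.swap_apply_right]; exact hv
  · rw [Equiv.swap_apply_of_ne_of_ne h1 h2]

include hadj hiJ hi'J in
lemma mem_swapSet_iff : ∀ j, j ∈ swapSet J i i' ↔ Equiv.swap i i' j ∈ J := by
  intro j
  have hne := adj_ne hadj
  rcases eq_or_ne j i with rfl | h1
  · rw [Equiv.swap_apply_left]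
    simp [swapSet, hi'J]
  rcases eq_or_ne j i' with rfl | h2
  · rw [Equiv.swap_apply_right]
    simp [swapSet, hne.symm, hiJ]
  · rw [Equiv.swap_apply_of_ne_of_ne h1 h2]
    simp [swapSet, h1, h2]

include hadj hv hiJ hi'J in
lemma cnt_swapSet : ∀ v, cnt lam (swapSet J i i') v = cnt lam J v := by
  intro v
  rw [cnt, cnt]
  apply Finset.card_bij (fun j _ => Equiv.swap i i' j)
  · intro a ha
    rw [Finset.mem_filter] at ha
    rw [Finset.mem_filter]
    exact ⟨(mem_swapSet_iff hadj hiJ hi'J a).mp ha.1, by rw [lam_swap_eq hv]; exact ha.2⟩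
  · intro a _ b _ he
    exact (Equiv.swap i i').injective he
  · intro b hb
    rw [Finset.mem_filter] at hb
    refine ⟨Equiv.swap i i' b, ?_, ?_⟩
    · rw [Finset.mem_filter]
      constructor
      · rw [mem_swapSet_iff hadj hiJ hi'J, Equiv.swap_apply_self]
        exact hb.1
      · rw [lam_swap_eq hv]; exact hb.2
    · rw [Equiv.swap_apply_self]

include hiJ hi'J in
lemma card_swapSet : (swapSet J i i').card = J.card := by
  rw [swapSet, Finset.card_insert_of_notMem (fun h => hiJ (Finset.mem_of_mem_erase h)),
    Finset.card_erase_of_mem hi'J]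
  have : 0 < J.card := Finset.card_pos.mpr ⟨i', hi'J⟩
  omega

include hadj hv hiJ hi'J in
lemma Nv_swapSet : Nv lam J = Nv lam (swapSet J i i') + 1 := by
  have hne := adj_ne hadj
  have hii : i < i' := by rw [Fin.lt_def]; omega
  have hmem : (i, i') ∈ PF lam J := by
    rw [PF, Finset.mem_filter]
    exact ⟨by simp, hii, hv, hiJ, hi'J⟩
  have hcard : (PF lam (swapSet J i i')).card = ((PF lam J).erase (i, i')).card := by
    apply Finset.card_bij (fun p _ => (Equiv.swap i i' p.1, Equiv.swap i i' p.2))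
    · intro p hp
      rw [PF, Finset.mem_filter] at hp
      obtain ⟨-, hlt, hveq, hp1, hp2⟩ := hp
      rw [Finset.mem_erase]
      constructor
      · intro hcon
        have e1 : Equiv.swap i i' p.1 = i := congrArg Prod.fst hcon
        have e2 : Equiv.swap i i' p.2 = i' := congrArg Prod.snd hcon
        have e1' : p.1 = i' := by
          have := congrArg (Equiv.swap i i') e1
          simpa [Equiv.swap_apply_self, Equiv.swap_apply_left] using this
        have e2' : p.2 = i := by
          have := congrArg (Equiv.swap i i') e2
          simpa [Equiv.swap_apply_self, Equiv.swap_apply_right] using this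
        rw [e1', e2'] at hlt
        exact absurd (lt_trans hlt hii) (lt_irrefl _)
      · rw [PF, Finset.mem_filter]
        refine ⟨by simp, ?_, ?_, ?_, ?_⟩
        · apply swap_adj_lt hadj hlt
          rintro ⟨e1, -⟩
          rw [e1] at hp1
          exact hp1 (Finset.mem_insert_self i _)
        · rw [lam_swap_eq hv, lam_swap_eq hv]; exact hveq
        · intro hcon
          exact hp1 ((mem_swapSet_iff hadj hiJ hi'J p.1).mpr hcon)
        · exact (mem_swapSet_iff hadj hiJ hi'J p.2).mp hp2
    · intro a _ b _ he
      have e1 : Equiv.swap i i' a.1 = Equiv.swap i i' b.1 := congrArg Prod.fst he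
      have e2 : Equiv.swap i i' a.2 = Equiv.swap i i' b.2 := congrArg Prod.snd he
      exact Prod.ext ((Equiv.swap i i').injective e1) ((Equiv.swap i i').injective e2)
    · intro p hp
      rw [Finset.mem_erase, PF, Finset.mem_filter] at hp
      obtain ⟨hpne, -, hlt, hveq, hp1, hp2⟩ := hp
      refine ⟨(Equiv.swap i i' p.1, Equiv.swap i i' p.2), ?_, ?_⟩
      · rw [PF, Finset.mem_filter]
        refine ⟨by simp, ?_, ?_, ?_, ?_⟩
        · apply swap_adj_lt hadj hlt
          rintro ⟨e1, e2⟩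
          exact hpne (Prod.ext e1 e2)
        · rw [lam_swap_eq hv, lam_swap_eq hv]; exact hveq
        · rw [mem_swapSet_iff hadj hiJ hi'J, Equiv.swap_apply_self]
          exact hp1
        · rw [mem_swapSet_iff hadj hiJ hi'J, Equiv.swap_apply_self]
          exact hp2
      · simp [Equiv.swap_apply_self]
  have hpos : 0 < (PF lam J).card := Finset.card_pos.mpr ⟨(i, i'), hmem⟩
  have := Finset.card_erase_of_mem hmem
  rw [Nv, Nv, hcard, this]
  omega

include hadj hv hiJ hi'J in
lemma indJ_swapSet : indJ lam J ∘ (Equiv.swap i i') = indJ lam (swapSet J i i') := by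
  funext j
  simp only [Function.comp, indJ]
  rw [lam_swap_eq hv]
  have := mem_swapSet_iff hadj hiJ hi'J j
  by_cases hj : j ∈ swapSet J i i'
  · rw [if_pos hj, if_pos (this.mp hj)]
  · rw [if_neg hj, if_neg (fun hc => hj (this.mpr hc))]

include hadj hv hiJ hi'J in
lemma indJ_adj : indJ lam J i' = indJ lam J i + 1 := by
  simp only [indJ, if_pos hi'J, if_neg hiJ, hv]
  ring

end SwapSet

lemma straighten_iter (q : ℝ) {n : ℕ} (xi : Fin n → ℝ)
    (hz : Function.Injective fun j => exp (I * (xi j : ℂ)))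
    {lam : Fin n → ℤ} (hlam : Antitone lam) :
    ∀ (m : ℕ) (J : Finset (Fin n)), Nv lam J = m →
      hallLittlewood q xi (indJ lam J)
        = (q : ℂ) ^ m * hallLittlewood q xi (indJ lam (srt lam J)) := by
  intro m
  induction m with
  | zero =>
    intro J hJ
    rw [srt_of_dc ((nv_zero_iff_dc J).mp hJ)]
    simp
  | succ m ih =>
    intro J hJ
    have hndc : ¬ dc lam J := by
      intro hdc
      rw [(nv_zero_iff_dc J).mpr hdc] at hJ
      omega
    obtain ⟨i, i', hadj, hv, hiJ, hi'J⟩ := exists_adj_violation hlam hndc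
    have hNv := Nv_swapSet hadj hv hiJ hi'J
    have hNv' : Nv lam (swapSet J i i') = m := by omega
    have hstep := straighten q xi hz (indJ lam J) hadj (indJ_adj hadj hv hiJ hi'J)
    rw [indJ_swapSet hadj hv hiJ hi'J] at hstep
    rw [hstep, ih _ hNv',
      srt_eq_of_cnt_eq (fun v => cnt_swapSet hadj hv hiJ hi'J v)]
    ring

section QBinom

noncomputable def Pq (q : ℝ) (t : ℕ) : ℝ := ∏ i ∈ Finset.range t, (1 - q ^ (i + 1))

noncomputable def Gq (q : ℝ) (m s : ℕ) : ℝ := Pq q m / (Pq q s * Pq q (m - s))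

variable {q : ℝ} (hq : 0 < q) (hq1 : q < 1)

include hq hq1 in
lemma one_sub_q_pow_pos (t : ℕ) : 0 < 1 - q ^ (t + 1) := by
  have : q ^ (t + 1) < 1 := pow_lt_one₀ (le_of_lt hq) hq1 (by omega)
  linarith

include hq hq1 in
lemma Pq_ne_zero (t : ℕ) : Pq q t ≠ 0 := by
  apply Finset.prod_ne_zero_iff.mpr
  intro i _
  exact ne_of_gt (one_sub_q_pow_pos hq hq1 i)

lemma Pq_zero : Pq q 0 = 1 := by simp [Pq]

lemma Pq_succ (t : ℕ) : Pq q (t + 1) = Pq q t * (1 - q ^ (t + 1)) := by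
  rw [Pq, Finset.prod_range_succ, Pq]

include hq hq1 in
lemma Gq_self (m : ℕ) : Gq q m m = 1 := by
  rw [Gq, Nat.sub_self, Pq_zero, mul_one, div_self (Pq_ne_zero hq hq1 m)]

include hq hq1 in
lemma Gq_zero (m : ℕ) : Gq q m 0 = 1 := by
  rw [Gq, Pq_zero, Nat.sub_zero, one_mul, div_self (Pq_ne_zero hq hq1 m)]

include hq hq1 in
lemma Gq_pascal {m s : ℕ} (hsm : s + 1 ≤ m) :
    Gq q (m + 1) (s + 1) = Gq q m (s + 1) + q ^ (m - s) * Gq q m s := by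
  obtain ⟨u, rfl⟩ : ∃ u, m = s + (u + 1) := ⟨m - s - 1, by omega⟩
  rw [Gq, Gq, Gq,
    show s + (u + 1) + 1 - (s + 1) = u + 1 by omega,
    show s + (u + 1) - (s + 1) = u by omega,
    show s + (u + 1) - s = u + 1 by omega,
    show s + (u + 1) + 1 = (s + (u + 1)) + 1 by omega,
    show s + (u + 1) = s + u + 1 by omega]
  rw [Pq_succ (s + u + 1), Pq_succ s, Pq_succ u]
  have hA := Pq_ne_zero hq hq1 (s + u + 1)
  have hB := Pq_ne_zero hq hq1 s
  have hC := Pq_ne_zero hq hq1 u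
  have h1 := ne_of_gt (one_sub_q_pow_pos hq hq1 (s + u + 1))
  have h2 := ne_of_gt (one_sub_q_pow_pos hq hq1 s)
  have h3 := ne_of_gt (one_sub_q_pow_pos hq hq1 u)
  field_simp
  ring

noncomputable def invF {α : Type*} [LinearOrder α] (B S : Finset α) : ℕ :=
  ((B ×ˢ B).filter (fun p => p.1 < p.2 ∧ p.1 ∉ S ∧ p.2 ∈ S)).card

lemma invF_emptyS {α : Type*} [LinearOrder α] (B : Finset α) : invF B ∅ = 0 := by
  simp [invF]

include hq hq1 in
lemma sum_pow_invF {α : Type*} [LinearOrder α] (B : Finset α) :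
    ∀ s : ℕ, (∑ S ∈ B.powersetCard s, q ^ invF B S)
      = if s ≤ B.card then Gq q B.card s else 0 := by
  classical
  induction B using Finset.induction_on_max with
  | empty =>
    intro s
    cases s with
    | zero =>
      simp [invF_emptyS, Gq_zero hq hq1]
    | succ s =>
      rw [Finset.powersetCard_eq_empty.mpr (by simp)]
      simp
  | insert b B hmax ih =>
    have hbB : b ∉ B := fun h => absurd (hmax b h) (lt_irrefl b)
    intro s
    rw [Finset.card_insert_of_notMem hbB]
    cases s with
    | zero =>
      simp [Finset.powersetCard_zero, invF_emptyS, Gq_zero hq hq1]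
    | succ s =>
      rw [Finset.powersetCard_succ_insert hbB]
      have hdisj : Disjoint (Finset.powersetCard (s + 1) B)
          ((Finset.powersetCard s B).image (insert b)) := by
        rw [Finset.disjoint_right]
        intro S hS1 hS2
        rw [Finset.mem_image] at hS1
        obtain ⟨T, hT, rfl⟩ := hS1
        rw [Finset.mem_powersetCard] at hS2
        exact hbB (hS2.1 (Finset.mem_insert_self b T))
      rw [Finset.sum_union hdisj]
      -- first sum
      have hfirst : ∀ S ∈ Finset.powersetCard (s + 1) B,
          invF (insert b B) S = invF B S := by
        intro S hS
        rw [Finset.mem_powersetCard] at hS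
        have hbS : b ∉ S := fun h => hbB (hS.1 h)
        rw [invF, invF]
        congr 1
        ext p
        simp only [Finset.mem_filter, Finset.mem_product, Finset.mem_insert]
        constructor
        · rintro ⟨⟨h1, h2⟩, hlt, hp1, hp2⟩
          have h2' : p.2 ∈ B := by
            rcases h2 with h2 | h2
            · exact absurd (h2 ▸ hp2) hbS
            · exact h2
          have h1' : p.1 ∈ B := by
            rcases h1 with h1 | h1
            · rw [h1] at hlt
              exact absurd (lt_trans (hmax _ h2') hlt) (lt_irrefl _)
            · exact h1
          exact ⟨⟨h1', h2'⟩, hlt, hp1, hp2⟩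
        · rintro ⟨⟨h1, h2⟩, hlt, hp1, hp2⟩
          exact ⟨⟨Or.inr h1, Or.inr h2⟩, hlt, hp1, hp2⟩
      -- second sum
      have hsecond : ∀ S ∈ Finset.powersetCard s B,
          invF (insert b B) (insert b S) = invF B S + (B.card - s) := by
        intro S hS
        rw [Finset.mem_powersetCard] at hS
        obtain ⟨hSB, hScard⟩ := hS
        have hbS : b ∉ S := fun h => hbB (hSB h)
        rw [invF]
        rw [← Finset.card_filter_add_card_filter_not
          (p := fun p : α × α => p.2 = b) (s := ((insert b B ×ˢ insert b B).filter
            (fun p => p.1 < p.2 ∧ p.1 ∉ insert b S ∧ p.2 ∈ insert b S)))]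
        have hc1 : (((insert b B ×ˢ insert b B).filter
            (fun p => p.1 < p.2 ∧ p.1 ∉ insert b S ∧ p.2 ∈ insert b S)).filter
              (fun p => p.2 = b)).card = B.card - s := by
          rw [← hScard, ← Finset.card_sdiff_of_subset hSB]
          apply Finset.card_bij (fun p _ => p.1)
          · intro p hp
            simp only [Finset.mem_filter, Finset.mem_product, Finset.mem_insert] at hp
            obtain ⟨⟨⟨h1, h2⟩, hlt, hp1, hp2⟩, hpb⟩ := hp
            rw [Finset.mem_sdiff]
            constructor
            · rcases h1 with h1 | h1
              · rw [h1, hpb] at hlt; exact absurd hlt (lt_irrefl _)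
              · exact h1
            · intro hcon
              exact hp1 (Or.inr hcon)
          · intro p hp p' hp' he
            simp only [Finset.mem_filter] at hp hp'
            exact Prod.ext he (by rw [hp.2, hp'.2])
          · intro x hx
            rw [Finset.mem_sdiff] at hx
            refine ⟨(x, b), Finset.mem_filter.mpr ⟨Finset.mem_filter.mpr
              ⟨Finset.mem_product.mpr ⟨Finset.mem_insert_of_mem hx.1,
                Finset.mem_insert_self b B⟩, hmax x hx.1, ?_,
                Finset.mem_insert_self b S⟩, rfl⟩, rfl⟩
            intro hcon
            rcases Finset.mem_insert.mp hcon with e | h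
            · exact absurd (hmax x hx.1) (e ▸ lt_irrefl x)
            · exact hx.2 h
        have hc2 : (((insert b B ×ˢ insert b B).filter
            (fun p => p.1 < p.2 ∧ p.1 ∉ insert b S ∧ p.2 ∈ insert b S)).filter
              (fun p => ¬ p.2 = b)).card = invF B S := by
          rw [invF]
          congr 1
          ext p
          simp only [Finset.mem_filter, Finset.mem_product, Finset.mem_insert]
          constructor
          · rintro ⟨⟨⟨h1, h2⟩, hlt, hp1, hp2⟩, hpb⟩
            have hp2B : p.2 ∈ B := by
              rcases h2 with rfl | h2
              · exact absurd rfl hpb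
              · exact h2
            have hp1B : p.1 ∈ B := by
              rcases h1 with rfl | h1
              · exact absurd (lt_trans (hmax _ hp2B) hlt) (lt_irrefl _)
              · exact h1
            refine ⟨⟨hp1B, hp2B⟩, hlt, ?_, ?_⟩
            · intro hcon; exact hp1 (Or.inr hcon)
            · rcases hp2 with h | h
              · exact absurd h hpb
              · exact h
          · rintro ⟨⟨h1, h2⟩, hlt, hp1, hp2⟩
            have hp2b : p.2 ≠ b := fun e => hbB (e ▸ h2)
            refine ⟨⟨⟨Or.inr h1, Or.inr h2⟩, hlt, ?_, Or.inr hp2⟩, hp2b⟩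
            rintro (e | h)
            · exact hbB (e ▸ h1)
            · exact hp1 h
        rw [hc1, hc2]
        omega
      have hinj : ∀ S ∈ Finset.powersetCard s B, ∀ T ∈ Finset.powersetCard s B,
          insert b S = insert b T → S = T := by
        intro S hS T hT he
        have h3 : (insert b S).erase b = (insert b T).erase b := by rw [he]
        rw [Finset.mem_powersetCard] at hS hT
        rwa [Finset.erase_insert (fun h => hbB (hS.1 h)),
          Finset.erase_insert (fun h => hbB (hT.1 h))] at h3
      have e1 : (∑ S ∈ Finset.powersetCard (s + 1) B, q ^ invF (insert b B) S)
          = if s + 1 ≤ B.card then Gq q B.card (s + 1) else 0 := by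
        rw [Finset.sum_congr rfl (fun S hS => by rw [hfirst S hS])]
        exact ih (s + 1)
      have e2 : (∑ S ∈ (Finset.powersetCard s B).image (insert b), q ^ invF (insert b B) S)
          = (if s ≤ B.card then Gq q B.card s else 0) * q ^ (B.card - s) := by
        rw [Finset.sum_image hinj]
        rw [Finset.sum_congr rfl (fun S hS => by rw [hsecond S hS, pow_add])]
        rw [← Finset.sum_mul, ih s]
      rw [e1, e2]
      -- now case split
      by_cases h1 : s + 1 ≤ B.card
      · rw [if_pos h1, if_pos (by omega), if_pos (by omega),
          Gq_pascal hq hq1 h1]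
        ring
      · by_cases h2 : s ≤ B.card
        · have hs : s = B.card := by omega
          rw [if_neg h1, if_pos h2, if_pos (by omega), hs, Gq_self hq hq1,
            Gq_self hq hq1, Nat.sub_self]
          simp
        · rw [if_neg h1, if_neg h2, if_neg (by omega)]
          simp

end QBinom

section Factorize

variable {n : ℕ} {lam : Fin n → ℤ}

lemma Nv_eq_sum_invF (J : Finset (Fin n)) :
    Nv lam J = ∑ v ∈ Finset.univ.image lam,
      invF (fib lam v) (J.filter (fun j => lam j = v)) := by
  rw [Nv, Finset.card_eq_sum_card_fiberwise
    (f := fun p : Fin n × Fin n => lam p.1) (t := Finset.univ.image lam)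
    (fun p hp => Finset.mem_image.mpr ⟨p.1, Finset.mem_univ _, rfl⟩)]
  apply Finset.sum_congr rfl
  intro v hv
  rw [invF]
  congr 1
  ext p
  constructor
  · intro hp
    rw [Finset.mem_filter] at hp
    obtain ⟨hpPF, hv1⟩ := hp
    rw [PF, Finset.mem_filter] at hpPF
    obtain ⟨-, hlt, hveq, hp1, hp2⟩ := hpPF
    simp only [Finset.mem_filter, Finset.mem_product, fib, Finset.mem_univ, true_and]
    refine ⟨⟨hv1, by rw [← hveq]; exact hv1⟩, hlt, ?_, hp2, by rw [← hveq]; exact hv1⟩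
    intro hcon
    exact hp1 hcon.1
  · intro hp
    simp only [Finset.mem_filter, Finset.mem_product, fib, Finset.mem_univ, true_and] at hp
    obtain ⟨⟨hf1, hf2⟩, hlt, hp1, hp2, -⟩ := hp
    rw [Finset.mem_filter]
    refine ⟨?_, hf1⟩
    rw [PF, Finset.mem_filter]
    refine ⟨by simp, hlt, by rw [hf1, hf2], ?_, hp2⟩
    intro hcon
    exact hp1 ⟨hcon, hf1⟩

/-- class of subsets with given fiberwise counts, supported on fibers from `W`. -/
noncomputable def classW (lam : Fin n → ℤ) (W : Finset ℤ) (c : ℤ → ℕ) : Finset (Finset (Fin n)) :=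
  Finset.univ.filter (fun J => J ⊆ W.biUnion (fib lam) ∧ ∀ v ∈ W, cnt lam J v = c v)

lemma classW_factor (W : Finset ℤ) (c : ℤ → ℕ) (q : ℝ) :
    (∑ J ∈ classW lam W c, ∏ v ∈ W, q ^ invF (fib lam v) (J.filter (fun j => lam j = v)))
      = ∏ v ∈ W, ∑ S ∈ (fib lam v).powersetCard (c v), q ^ invF (fib lam v) S := by
  classical
  induction W using Finset.induction_on with
  | empty =>
    have : classW lam ∅ c = {∅} := by
      ext J
      simp [classW, Finset.subset_empty]
    rw [this]
    simp
  | @insert w W hwW ih =>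
    rw [Finset.prod_insert hwW, ← ih, Finset.sum_mul_sum]
    rw [← Finset.sum_product']
    apply Finset.sum_nbij' (i := fun J => (J.filter (fun j => lam j = w), J.filter (fun j => ¬ lam j = w)))
      (j := fun p => p.1 ∪ p.2)
    · -- membership forward
      intro J hJ
      rw [classW, Finset.mem_filter] at hJ
      obtain ⟨-, hsub, hcnt⟩ := hJ
      rw [Finset.mem_product]
      constructor
      · rw [Finset.mem_powersetCard]
        refine ⟨fun j hj => ?_, ?_⟩
        · rw [Finset.mem_filter] at hj
          rw [fib, Finset.mem_filter]
          exact ⟨Finset.mem_univ _, hj.2⟩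
        · exact hcnt w (Finset.mem_insert_self w W)
      · rw [classW, Finset.mem_filter]
        refine ⟨Finset.mem_univ _, fun j hj => ?_, fun v hv => ?_⟩
        · rw [Finset.mem_filter] at hj
          have := hsub hj.1
          rw [Finset.mem_biUnion] at this ⊢
          obtain ⟨w', hw', hjw'⟩ := this
          rw [fib, Finset.mem_filter] at hjw'
          rcases Finset.mem_insert.mp hw' with rfl | hw'
          · exact absurd hjw'.2 hj.2
          · exact ⟨w', hw', by rw [fib, Finset.mem_filter]; exact hjw'⟩
        · have hvw : v ≠ w := fun e => hwW (e ▸ hv)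
          rw [← hcnt v (Finset.mem_insert_of_mem hv), cnt, cnt, Finset.filter_filter]
          congr 1
          apply Finset.filter_congr
          intro j _
          constructor
          · rintro ⟨-, h2⟩; exact h2
          · intro h2; exact ⟨by rw [h2]; exact hvw, h2⟩
    · -- membership backward
      intro p hp
      rw [Finset.mem_product] at hp
      obtain ⟨hp1, hp2⟩ := hp
      rw [Finset.mem_powersetCard] at hp1
      rw [classW, Finset.mem_filter] at hp2
      obtain ⟨-, hsub2, hcnt2⟩ := hp2
      have hlam1 : ∀ j ∈ p.1, lam j = w := by
        intro j hj
        have := hp1.1 hj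
        rw [fib, Finset.mem_filter] at this
        exact this.2
      have hlam2 : ∀ j ∈ p.2, lam j ∈ W := by
        intro j hj
        have := hsub2 hj
        rw [Finset.mem_biUnion] at this
        obtain ⟨w', hw', hjw'⟩ := this
        rw [fib, Finset.mem_filter] at hjw'
        rw [hjw'.2]
        exact hw'
      rw [classW, Finset.mem_filter]
      refine ⟨Finset.mem_univ _, fun j hj => ?_, fun v hv => ?_⟩
      · rw [Finset.mem_biUnion]
        rcases Finset.mem_union.mp hj with hj | hj
        · exact ⟨w, Finset.mem_insert_self w W, by
            rw [fib, Finset.mem_filter]; exact ⟨Finset.mem_univ _, hlam1 j hj⟩⟩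
        · exact ⟨lam j, Finset.mem_insert_of_mem (hlam2 j hj), by
            rw [fib, Finset.mem_filter]; exact ⟨Finset.mem_univ _, rfl⟩⟩
      · rcases Finset.mem_insert.mp hv with rfl | hv
        · rw [cnt, Finset.filter_union]
          have e1 : p.1.filter (fun j => lam j = v) = p.1 :=
            Finset.filter_true_of_mem hlam1
          have e2 : p.2.filter (fun j => lam j = v) = ∅ := by
            rw [Finset.filter_eq_empty_iff]
            intro j hj
            intro hcon
            exact hwW (hcon ▸ hlam2 j hj)
          rw [e1, e2, Finset.union_empty]
          exact hp1.2
        · have hvw : v ≠ w := fun e => hwW (e ▸ hv)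
          rw [cnt, Finset.filter_union]
          have e1 : p.1.filter (fun j => lam j = v) = ∅ := by
            rw [Finset.filter_eq_empty_iff]
            intro j hj hcon
            exact hvw (hcon.symm.trans (hlam1 j hj))
          rw [e1, Finset.empty_union]
          exact hcnt2 v hv
    · -- left inverse
      intro J hJ
      simp only
      rw [Finset.filter_union_filter_not_eq]
    · -- right inverse
      intro p hp
      rw [Finset.mem_product] at hp
      obtain ⟨hp1, hp2⟩ := hp
      rw [Finset.mem_powersetCard] at hp1
      rw [classW, Finset.mem_filter] at hp2
      have hlam1 : ∀ j ∈ p.1, lam j = w := by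
        intro j hj
        have := hp1.1 hj
        rw [fib, Finset.mem_filter] at this
        exact this.2
      have hlam2 : ∀ j ∈ p.2, lam j ∈ W := by
        intro j hj
        have := hp2.2.1 hj
        rw [Finset.mem_biUnion] at this
        obtain ⟨w', hw', hjw'⟩ := this
        rw [fib, Finset.mem_filter] at hjw'
        rw [hjw'.2]; exact hw'
      have e1 : (p.1 ∪ p.2).filter (fun j => lam j = w) = p.1 := by
        rw [Finset.filter_union, Finset.filter_true_of_mem hlam1,
          Finset.filter_eq_empty_iff.mpr
            (fun j hj hcon => hwW (by rw [← hcon]; exact hlam2 j hj)),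
          Finset.union_empty]
      have e2 : (p.1 ∪ p.2).filter (fun j => ¬ lam j = w) = p.2 := by
        ext j
        rw [Finset.mem_filter]
        constructor
        · rintro ⟨h1, hcon⟩
          rcases Finset.mem_union.mp h1 with h | h
          · exact absurd (hlam1 j h) hcon
          · exact h
        · intro hj
          exact ⟨Finset.mem_union_right _ hj,
            fun hcon => hwW (by rw [← hcon]; exact hlam2 j hj)⟩
      rw [Prod.ext_iff]
      exact ⟨e1, e2⟩
    · -- summand equality
      intro J hJ
      rw [classW, Finset.mem_filter] at hJ
      obtain ⟨-, hsub, hcnt⟩ := hJ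
      rw [Finset.prod_insert hwW]
      congr 1
      apply Finset.prod_congr rfl
      intro v hv
      have hvw : v ≠ w := fun e => hwW (e ▸ hv)
      congr 2
      rw [Finset.filter_filter]
      apply Finset.filter_congr
      intro j _
      constructor
      · intro h2; exact ⟨by rw [h2]; exact hvw, h2⟩
      · rintro ⟨-, h2⟩; exact h2

end Factorize

section Vside

variable {n : ℕ} {lam : Fin n → ℤ}

lemma fib_interval (hlam : Antitone lam) {v : ℤ} (hv : v ∈ Finset.univ.image lam) :
    ∃ a : ℕ, a + (fib lam v).card ≤ n ∧
      ∀ j : Fin n, (lam j = v ↔ (a ≤ (j : ℕ) ∧ (j : ℕ) < a + (fib lam v).card)) := by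
  classical
  obtain ⟨j0, -, hj0⟩ := Finset.mem_image.mp hv
  have hj0f : j0 ∈ fib lam v := by rw [fib, Finset.mem_filter]; exact ⟨Finset.mem_univ _, hj0⟩
  set T := (fib lam v).image (Fin.val) with hT
  have hTne : T.Nonempty := ⟨(j0 : ℕ), Finset.mem_image.mpr ⟨j0, hj0f, rfl⟩⟩
  set a := T.min' hTne with ha
  set b := T.max' hTne with hb
  obtain ⟨ja, hja, hjav⟩ := Finset.mem_image.mp (T.min'_mem hTne)
  obtain ⟨jb, hjb, hjbv⟩ := Finset.mem_image.mp (T.max'_mem hTne)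
  rw [fib, Finset.mem_filter] at hja hjb
  have hconv : ∀ j : Fin n, a ≤ (j : ℕ) → (j : ℕ) ≤ b → lam j = v := by
    intro j h1 h2
    have l1 : lam j ≤ lam ja := hlam (by rw [Fin.le_def]; omega)
    have l2 : lam jb ≤ lam j := hlam (by rw [Fin.le_def]; omega)
    rw [hja.2] at l1
    rw [hjb.2] at l2
    omega
  have hbn : b < n := by have := jb.isLt; omega
  have hTeq : T = Finset.Ico a (b + 1) := by
    ext x
    rw [Finset.mem_Ico]
    constructor
    · intro hx
      have h1 := T.min'_le x hx
      have h2 := T.le_max' x hx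
      omega
    · rintro ⟨h1, h2⟩
      have hxn : x < n := by omega
      refine Finset.mem_image.mpr ⟨⟨x, hxn⟩, ?_, rfl⟩
      rw [fib, Finset.mem_filter]
      exact ⟨Finset.mem_univ _, hconv ⟨x, hxn⟩ (by simpa using h1)
        (by simpa using (by omega : x ≤ b))⟩
  have hcardT : T.card = (fib lam v).card := Finset.card_image_of_injective _ Fin.val_injective
  have hab : a ≤ b := T.min'_le b (T.max'_mem hTne)
  have hcard2 : (fib lam v).card = b + 1 - a := by rw [← hcardT, hTeq, Nat.card_Ico]
  refine ⟨a, by omega, ?_⟩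
  intro j
  constructor
  · intro hj
    have hmem : (j : ℕ) ∈ T := Finset.mem_image.mpr
      ⟨j, by rw [fib, Finset.mem_filter]; exact ⟨Finset.mem_univ _, hj⟩, rfl⟩
    rw [hTeq, Finset.mem_Ico] at hmem
    omega
  · rintro ⟨h1, h2⟩
    exact hconv j h1 (by omega)

lemma rk_val {v : ℤ} {a m : ℕ}
    (hfi : ∀ j : Fin n, lam j = v ↔ (a ≤ (j : ℕ) ∧ (j : ℕ) < a + m))
    {j : Fin n} (hj : lam j = v) :
    rk lam j = (j : ℕ) - a := by
  rw [rk_eq_of_val hj]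
  have hcard : ((fib lam v).filter (· < j)).card = (Finset.Ico a (j : ℕ)).card := by
    refine Finset.card_bij (fun (k : Fin n) (_ : k ∈ (fib lam v).filter (· < j)) => (k : ℕ)) ?_ ?_ ?_
    · intro k hk
      rw [Finset.mem_filter, fib, Finset.mem_filter] at hk
      obtain ⟨⟨-, hkv⟩, hkj⟩ := hk
      rw [Finset.mem_Ico]
      rw [Fin.lt_def] at hkj
      exact ⟨((hfi k).mp hkv).1, hkj⟩
    · intro k _ k' _ he
      exact Fin.val_injective he
    · intro x hx
      rw [Finset.mem_Ico] at hx
      have hxn : x < n := lt_trans hx.2 j.isLt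
      have hjb := (hfi j).mp hj
      refine ⟨⟨x, hxn⟩, ?_, rfl⟩
      rw [Finset.mem_filter, fib, Finset.mem_filter]
      refine ⟨⟨Finset.mem_univ _, (hfi ⟨x, hxn⟩).mpr ⟨hx.1, by simp; omega⟩⟩, ?_⟩
      rw [Fin.lt_def]
      exact hx.2
  rw [hcard, Nat.card_Ico]

lemma memK_iff {K : Finset (Fin n)} (hdc : dc lam K) {v : ℤ} {a m : ℕ}
    (hfi : ∀ j : Fin n, lam j = v ↔ (a ≤ (j : ℕ) ∧ (j : ℕ) < a + m))
    {j : Fin n} (hj : lam j = v) :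
    j ∈ K ↔ (j : ℕ) < a + cnt lam K v := by
  have hsrt := srt_of_dc hdc
  have h1 : (j ∈ K) = (j ∈ srt lam K) := by rw [hsrt]
  rw [h1, mem_srt_iff, rk_val hfi hj, hj]
  have h2 := (hfi j).mp hj
  omega

variable {q : ℝ}

lemma one_sub_q_pow_ne' (hq : 0 < q) (hq1 : q < 1) {t : ℕ} (ht : 1 ≤ t) : 1 - q ^ t ≠ 0 := by
  obtain ⟨u, rfl⟩ : ∃ u, t = u + 1 := ⟨t - 1, by omega⟩
  exact ne_of_gt (one_sub_q_pow_pos hq hq1 u)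

lemma telescope_s15 (hq : 0 < q) (hq1 : q < 1) :
    ∀ (L d0 : ℕ), 1 ≤ d0 →
    (∏ t ∈ Finset.range L, ((1 - q ^ (d0 + t + 1)) / (1 - q ^ (d0 + t))))
      = (1 - q ^ (d0 + L)) / (1 - q ^ d0) := by
  intro L
  induction L with
  | zero =>
    intro d0 h
    rw [Finset.range_zero, Finset.prod_empty, Nat.add_zero,
      div_self (one_sub_q_pow_ne' hq hq1 h)]
  | succ L ih =>
    intro d0 h
    rw [Finset.prod_range_succ, ih d0 h]
    have h1 := one_sub_q_pow_ne' hq hq1 (t := d0) h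
    have h2 := one_sub_q_pow_ne' hq hq1 (t := d0 + L) (by omega)
    rw [show d0 + (L + 1) = d0 + L + 1 by omega]
    field_simp

lemma prod_top (hq : 0 < q) (hq1 : q < 1) :
    ∀ s m : ℕ, s ≤ m →
    (∏ t ∈ Finset.range s, (1 - q ^ (m - t))) * Pq q (m - s) = Pq q m := by
  intro s
  induction s with
  | zero => intro m h; simp [Pq_zero]
  | succ s ih =>
    intro m h
    rw [Finset.prod_range_succ]
    have e1 : m - s = (m - (s + 1)) + 1 := by omega
    calc (∏ t ∈ Finset.range s, (1 - q ^ (m - t))) * (1 - q ^ (m - s)) * Pq q (m - (s + 1))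
        = (∏ t ∈ Finset.range s, (1 - q ^ (m - t)))
            * (Pq q (m - (s + 1)) * (1 - q ^ ((m - (s + 1)) + 1))) := by
          rw [← e1]; ring
      _ = (∏ t ∈ Finset.range s, (1 - q ^ (m - t))) * Pq q (m - s) := by
          rw [← Pq_succ, ← e1]
      _ = Pq q m := ih m (by omega)

lemma prod_bot : ∀ s : ℕ, (∏ t ∈ Finset.range s, (1 - q ^ (s - t))) = Pq q s := by
  intro s
  have h := Finset.prod_range_reflect (fun u => 1 - q ^ (u + 1)) s
  rw [Pq, ← h]
  apply Finset.prod_congr rfl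
  intro t ht
  rw [Finset.mem_range] at ht
  have e : s - t = s - 1 - t + 1 := by omega
  rw [e]

lemma V_fiber (hq : 0 < q) (hq1 : q < 1) {K : Finset (Fin n)} {v : ℤ} {a m s : ℕ}
    (hs : s ≤ m) (han : a + m ≤ n)
    (hfi : ∀ j : Fin n, lam j = v ↔ (a ≤ (j : ℕ) ∧ (j : ℕ) < a + m))
    (hK : ∀ j : Fin n, lam j = v → (j ∈ K ↔ (j : ℕ) < a + s)) :
    (∏ j ∈ fib lam v, ∏ k : Fin n,
        (if j < k ∧ j ∈ K ∧ k ∉ K ∧ lam j = lam k then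
          (1 - q ^ ((k : ℕ) - (j : ℕ) + 1)) / (1 - q ^ ((k : ℕ) - (j : ℕ))) else 1))
      = Gq q m s := by
  classical
  have hinner : ∀ j ∈ fib lam v,
      (∏ k : Fin n, (if j < k ∧ j ∈ K ∧ k ∉ K ∧ lam j = lam k then
          (1 - q ^ ((k : ℕ) - (j : ℕ) + 1)) / (1 - q ^ ((k : ℕ) - (j : ℕ))) else 1))
        = (if (j : ℕ) < a + s then
            (1 - q ^ (a + m - (j : ℕ))) / (1 - q ^ (a + s - (j : ℕ))) else 1) := by
    intro j hj
    rw [fib, Finset.mem_filter] at hj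
    have hjv := hj.2
    have hjb := (hfi j).mp hjv
    by_cases hjs : (j : ℕ) < a + s
    · have hjK : j ∈ K := (hK j hjv).mpr hjs
      rw [if_pos hjs]
      have hcond : ∀ k : Fin n, (j < k ∧ j ∈ K ∧ k ∉ K ∧ lam j = lam k)
          ↔ (a + s ≤ (k : ℕ) ∧ (k : ℕ) < a + m) := by
        intro k
        constructor
        · rintro ⟨hlt, -, hkK, hveq⟩
          have hkv : lam k = v := hveq.symm.trans hjv
          have hkb := (hfi k).mp hkv
          have hnk := (hK k hkv)
          constructor
          · by_contra hcon
            exact hkK (hnk.mpr (by omega))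
          · exact hkb.2
        · rintro ⟨h1, h2⟩
          have hkv : lam k = v := (hfi k).mpr ⟨by omega, h2⟩
          refine ⟨?_, hjK, ?_, hjv.trans hkv.symm⟩
          · rw [Fin.lt_def]; omega
          · intro hc
            have := (hK k hkv).mp hc
            omega
      calc (∏ k : Fin n, (if j < k ∧ j ∈ K ∧ k ∉ K ∧ lam j = lam k then
              (1 - q ^ ((k : ℕ) - (j : ℕ) + 1)) / (1 - q ^ ((k : ℕ) - (j : ℕ))) else 1))
          = ∏ k : Fin n, (if (a + s ≤ (k : ℕ) ∧ (k : ℕ) < a + m) then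
              (1 - q ^ ((k : ℕ) - (j : ℕ) + 1)) / (1 - q ^ ((k : ℕ) - (j : ℕ))) else 1) := by
            apply Finset.prod_congr rfl
            intro k _
            exact if_congr (hcond k) rfl rfl
        _ = ∏ k ∈ Finset.univ.filter (fun k : Fin n => a + s ≤ (k : ℕ) ∧ (k : ℕ) < a + m),
              (1 - q ^ ((k : ℕ) - (j : ℕ) + 1)) / (1 - q ^ ((k : ℕ) - (j : ℕ))) :=
            (Finset.prod_filter _ _).symm
        _ = ∏ y ∈ Finset.Ico (a + s) (a + m),
              (1 - q ^ (y - (j : ℕ) + 1)) / (1 - q ^ (y - (j : ℕ))) := by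
            refine Finset.prod_bij'
              (i := fun k (_ : k ∈ Finset.univ.filter
                (fun k : Fin n => a + s ≤ (k : ℕ) ∧ (k : ℕ) < a + m)) => (k : ℕ))
              (j := fun y hy => (⟨y, lt_of_lt_of_le (Finset.mem_Ico.mp hy).2 han⟩ : Fin n))
              ?hi ?hj ?li ?ri ?hcomp
            case hi =>
              intro k hk
              simp only [Finset.mem_filter, Finset.mem_univ, true_and] at hk
              simp only [Finset.mem_Ico]
              exact hk
            case hj =>
              intro y hy
              simp only [Finset.mem_Ico] at hy
              simp only [Finset.mem_filter, Finset.mem_univ, true_and]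
              exact hy
            case li =>
              intro k _
              exact Fin.ext rfl
            case ri =>
              intro y _
              rfl
            case hcomp =>
              intro k _
              rfl
        _ = ∏ t ∈ Finset.range (a + m - (a + s)),
              (1 - q ^ ((a + s + t) - (j : ℕ) + 1)) / (1 - q ^ ((a + s + t) - (j : ℕ))) := by
            rw [Finset.prod_Ico_eq_prod_range]
        _ = ∏ t ∈ Finset.range (m - s),
              (1 - q ^ ((a + s - (j : ℕ)) + t + 1)) / (1 - q ^ ((a + s - (j : ℕ)) + t)) := by
            rw [show a + m - (a + s) = m - s by omega]
            apply Finset.prod_congr rfl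
            intro t _
            have e1 : a + s + t - (j : ℕ) + 1 = a + s - (j : ℕ) + t + 1 := by omega
            have e2 : a + s + t - (j : ℕ) = a + s - (j : ℕ) + t := by omega
            rw [e1, e2]
        _ = (1 - q ^ ((a + s - (j : ℕ)) + (m - s))) / (1 - q ^ (a + s - (j : ℕ))) :=
            telescope_s15 hq hq1 (m - s) _ (by omega)
        _ = (1 - q ^ (a + m - (j : ℕ))) / (1 - q ^ (a + s - (j : ℕ))) := by
            have e : (a + s - (j : ℕ)) + (m - s) = a + m - (j : ℕ) := by omega
            rw [e]
    · rw [if_neg hjs]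
      apply Finset.prod_eq_one
      intro k _
      rw [if_neg]
      rintro ⟨-, hjK, -, -⟩
      exact hjs ((hK j hjv).mp hjK)
  rw [Finset.prod_congr rfl hinner]
  have houter : (∏ j ∈ fib lam v, (if (j : ℕ) < a + s then
      (1 - q ^ (a + m - (j : ℕ))) / (1 - q ^ (a + s - (j : ℕ))) else 1))
      = ∏ t ∈ Finset.range m, (if t < s then
          (1 - q ^ (m - t)) / (1 - q ^ (s - t)) else 1) := by
    refine Finset.prod_bij'
      (i := fun j (_ : j ∈ fib lam v) => (j : ℕ) - a)
      (j := fun t ht => (⟨a + t, by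
        rw [Finset.mem_range] at ht; omega⟩ : Fin n))
      ?hi ?hj ?li ?ri ?hcomp
    case hi =>
      intro j hj
      simp only [fib, Finset.mem_filter, Finset.mem_univ, true_and] at hj
      have h2 := (hfi j).mp hj
      simp only [Finset.mem_range]
      omega
    case hj =>
      intro t ht
      simp only [Finset.mem_range] at ht
      simp only [fib, Finset.mem_filter, Finset.mem_univ, true_and]
      refine (hfi _).mpr ⟨?_, ?_⟩
      · exact Nat.le_add_right a t
      · exact (by omega : a + t < a + m)
    case li =>
      intro j hj
      simp only [fib, Finset.mem_filter, Finset.mem_univ, true_and] at hj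
      have h2 := (hfi j).mp hj
      apply Fin.ext
      show a + ((j : ℕ) - a) = (j : ℕ)
      omega
    case ri =>
      intro t ht
      simp only [Finset.mem_range] at ht
      show a + t - a = t
      omega
    case hcomp =>
      intro j hj
      simp only [fib, Finset.mem_filter, Finset.mem_univ, true_and] at hj
      have hjb := (hfi j).mp hj
      by_cases hjs : (j : ℕ) < a + s
      · rw [if_pos hjs, if_pos (show (j : ℕ) - a < s by omega)]
        have e1 : m - ((j : ℕ) - a) = a + m - (j : ℕ) := by omega
        have e2 : s - ((j : ℕ) - a) = a + s - (j : ℕ) := by omega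
        rw [e1, e2]
      · rw [if_neg hjs, if_neg (show ¬ ((j : ℕ) - a < s) by omega)]
  rw [houter]
  have hsplit : (∏ t ∈ Finset.range m, (if t < s then
      (1 - q ^ (m - t)) / (1 - q ^ (s - t)) else 1))
      = ∏ t ∈ Finset.range s, (1 - q ^ (m - t)) / (1 - q ^ (s - t)) := by
    rw [← Finset.prod_filter]
    congr 1
    ext x
    simp only [Finset.mem_filter, Finset.mem_range]
    omega
  rw [hsplit, Finset.prod_div_distrib, prod_bot]
  have hPm := Pq_ne_zero hq hq1 m
  have hPs := Pq_ne_zero hq hq1 s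
  have hPms := Pq_ne_zero hq hq1 (m - s)
  have htop : (∏ t ∈ Finset.range s, (1 - q ^ (m - t))) = Pq q m / Pq q (m - s) := by
    rw [eq_div_iff hPms]
    exact prod_top hq hq1 s m hs
  rw [htop, Gq, div_div, mul_comm]

lemma Vcoef_eq_prod (hq : 0 < q) (hq1 : q < 1) (hlam : Antitone lam)
    {K : Finset (Fin n)} (hdc : dc lam K) :
    Vcoef q lam K = ∏ v ∈ Finset.univ.image lam, Gq q (fib lam v).card (cnt lam K v) := by
  classical
  rw [Vcoef]
  rw [← Finset.prod_fiberwise_of_maps_to (g := lam) (t := Finset.univ.image lam)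
    (fun j _ => Finset.mem_image.mpr ⟨j, Finset.mem_univ _, rfl⟩)]
  apply Finset.prod_congr rfl
  intro v hv
  obtain ⟨a, han, hfi⟩ := fib_interval hlam hv
  have hs := cnt_le_card_fib (lam := lam) K v
  have hK : ∀ j : Fin n, lam j = v → (j ∈ K ↔ (j : ℕ) < a + cnt lam K v) :=
    fun j hj => memK_iff hdc hfi hj
  have := V_fiber hq hq1 hs han hfi hK
  rw [← this]
  apply Finset.prod_congr
  · rw [fib]
  · intro j _
    rfl

end Vside

lemma coeff_eval {n : ℕ} {lam : Fin n → ℤ} (hlam : Antitone lam) {q : ℝ}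
    (hq : 0 < q) (hq1 : q < 1)
    {K : Finset (Fin n)} (hdc : dc lam K) (r : ℕ) (hr : K.card = r) :
    (∑ J ∈ Finset.univ.filter (fun J : Finset (Fin n) => J.card = r ∧ srt lam J = K),
        q ^ Nv lam J) = Vcoef q lam K := by
  classical
  have hclass : Finset.univ.filter (fun J : Finset (Fin n) => J.card = r ∧ srt lam J = K)
      = classW lam (Finset.univ.image lam) (cnt lam K) := by
    ext J
    simp only [classW, Finset.mem_filter, Finset.mem_univ, true_and]
    constructor
    · rintro ⟨hcard, hsrt⟩
      refine ⟨fun j hj => Finset.mem_biUnion.mpr ⟨lam j,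
        Finset.mem_image.mpr ⟨j, Finset.mem_univ _, rfl⟩,
        by rw [fib, Finset.mem_filter]; exact ⟨Finset.mem_univ _, rfl⟩⟩, fun v hv => ?_⟩
      rw [← hsrt, cnt_srt]
    · rintro ⟨hsub, hcnt⟩
      have hcnt' : ∀ v, cnt lam J v = cnt lam K v := by
        intro v
        by_cases hv : v ∈ Finset.univ.image lam
        · exact hcnt v hv
        · have h1 : cnt lam J v = 0 := by
            rw [cnt, Finset.card_eq_zero, Finset.filter_eq_empty_iff]
            intro j _ hcon
            exact hv (Finset.mem_image.mpr ⟨j, Finset.mem_univ _, hcon⟩)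
          have h2 : cnt lam K v = 0 := by
            rw [cnt, Finset.card_eq_zero, Finset.filter_eq_empty_iff]
            intro j _ hcon
            exact hv (Finset.mem_image.mpr ⟨j, Finset.mem_univ _, hcon⟩)
          rw [h1, h2]
      have hsrtJ : srt lam J = K := by
        rw [srt_eq_of_cnt_eq hcnt', srt_of_dc hdc]
      refine ⟨?_, hsrtJ⟩
      have hJK : J.card = K.card := by
        rw [card_eq_sum_cnt, card_eq_sum_cnt (J := K)]
        exact Finset.sum_congr rfl fun v _ => hcnt' v
      rw [hJK, hr]
  rw [hclass]
  calc (∑ J ∈ classW lam (Finset.univ.image lam) (cnt lam K), q ^ Nv lam J)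
      = ∑ J ∈ classW lam (Finset.univ.image lam) (cnt lam K),
          ∏ v ∈ Finset.univ.image lam,
            q ^ invF (fib lam v) (J.filter (fun j => lam j = v)) := by
        apply Finset.sum_congr rfl
        intro J _
        rw [Nv_eq_sum_invF, ← Finset.prod_pow_eq_pow_sum]
    _ = ∏ v ∈ Finset.univ.image lam,
          ∑ S ∈ (fib lam v).powersetCard (cnt lam K v), q ^ invF (fib lam v) S :=
        classW_factor _ _ q
    _ = ∏ v ∈ Finset.univ.image lam, Gq q (fib lam v).card (cnt lam K v) := by
        apply Finset.prod_congr rfl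
        intro v _
        rw [sum_pow_invF hq hq1 (fib lam v) (cnt lam K v),
          if_pos (cnt_le_card_fib K v)]
    _ = Vcoef q lam K := (Vcoef_eq_prod hq hq1 hlam hdc).symm

theorem hallLittlewood_pieri (q : ℝ) (hq : 0 < q) (hq1 : q < 1) (n r : ℕ)
    (hr : 1 ≤ r) (hrn : r ≤ n)
    (xi : Fin n → ℝ) (hxi : StrictAnti xi)
    (hxiU : ∀ j, xi j < Real.pi) (hxiL : ∀ j, -Real.pi < xi j)
    (lam : Fin n → ℤ) (hlam : Antitone lam) :
    (∑ J : Finset (Fin n), if J.card = r then ∏ j ∈ J, exp (I * (xi j : ℂ)) else 0)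
        * hallLittlewood q xi lam
      = ∑ J : Finset (Fin n),
          if J.card = r ∧ Antitone (fun k => lam k + if k ∈ J then 1 else 0) then
            ((Vcoef q lam J : ℝ) : ℂ)
              * hallLittlewood q xi (fun k => lam k + if k ∈ J then 1 else 0)
          else 0 := by
  classical
  have hz : Function.Injective fun j => exp (I * (xi j : ℂ)) := exp_inj xi hxi hxiU hxiL
  have e0 : (∑ J : Finset (Fin n), if J.card = r then ∏ j ∈ J, exp (I * (xi j : ℂ)) else 0)
      = ∑ J ∈ Finset.univ.filter (fun J : Finset (Fin n) => J.card = r),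
          ∏ j ∈ J, exp (I * (xi j : ℂ)) := (Finset.sum_filter _ _).symm
  have step1 : (∑ J : Finset (Fin n), if J.card = r then ∏ j ∈ J, exp (I * (xi j : ℂ)) else 0)
      * hallLittlewood q xi lam
      = ∑ J ∈ Finset.univ.filter (fun J : Finset (Fin n) => J.card = r),
          hallLittlewood q xi (indJ lam J) := by
    rw [e0, hallLittlewood, Finset.sum_mul_sum, Finset.sum_comm]
    have perσ : ∀ σ : Equiv.Perm (Fin n),
        (∑ J ∈ Finset.univ.filter (fun J : Finset (Fin n) => J.card = r),
          (∏ j ∈ J, exp (I * (xi j : ℂ)))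
            * (Cfun q (xi ∘ σ) * exp (I * ∑ j : Fin n, (lam j : ℂ) * (xi (σ j) : ℂ))))
        = ∑ J ∈ Finset.univ.filter (fun J : Finset (Fin n) => J.card = r),
            Cfun q (xi ∘ σ) * exp (I * ∑ j : Fin n, ((indJ lam J) j : ℂ) * (xi (σ j) : ℂ)) := by
      intro σ
      have hg : ∀ J : Finset (Fin n),
          Cfun q (xi ∘ σ) * exp (I * ∑ j : Fin n, ((indJ lam J) j : ℂ) * (xi (σ j) : ℂ))
          = (∏ j ∈ J, exp (I * (xi (σ j) : ℂ)))
              * (Cfun q (xi ∘ σ) * exp (I * ∑ j : Fin n, (lam j : ℂ) * (xi (σ j) : ℂ))) := by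
        intro J
        have h1 : ∀ j : Fin n, ((indJ lam J) j : ℂ) * (xi (σ j) : ℂ)
            = (lam j : ℂ) * (xi (σ j) : ℂ) + (if j ∈ J then ((xi (σ j) : ℝ) : ℂ) else 0) := by
          intro j
          simp only [indJ]
          split_ifs <;> push_cast <;> ring
        have hsum : (I : ℂ) * ∑ j : Fin n, ((indJ lam J) j : ℂ) * (xi (σ j) : ℂ)
            = I * (∑ j : Fin n, (lam j : ℂ) * (xi (σ j) : ℂ))
              + ∑ j ∈ J, (I * ((xi (σ j) : ℝ) : ℂ)) := by
          rw [Finset.sum_congr rfl (fun j _ => h1 j), Finset.sum_add_distrib]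
          have h2 : (∑ j : Fin n, if j ∈ J then ((xi (σ j) : ℝ) : ℂ) else 0)
              = ∑ j ∈ J, ((xi (σ j) : ℝ) : ℂ) := by
            rw [← Finset.sum_filter]
            congr 1
            ext j
            simp
          rw [h2, mul_add, Finset.mul_sum, Finset.mul_sum]
        rw [hsum, exp_add, Complex.exp_sum]
        ring
      have hπ : (∑ J ∈ Finset.univ.filter (fun J : Finset (Fin n) => J.card = r),
            ∏ j ∈ J, exp (I * (xi j : ℂ)))
          = ∑ J ∈ Finset.univ.filter (fun J : Finset (Fin n) => J.card = r),
              ∏ j ∈ J, exp (I * (xi (σ j) : ℂ)) := by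
        refine Finset.sum_bij'
          (i := fun J (_ : J ∈ Finset.univ.filter (fun J : Finset (Fin n) => J.card = r)) =>
            J.image ⇑σ⁻¹)
          (j := fun J (_ : J ∈ Finset.univ.filter (fun J : Finset (Fin n) => J.card = r)) =>
            J.image ⇑σ)
          ?hi ?hj ?li ?ri ?hcomp
        case hi =>
          intro J hJ
          simp only [Finset.mem_filter, Finset.mem_univ, true_and] at hJ ⊢
          rw [Finset.card_image_of_injective _ (Equiv.injective _)]
          exact hJ
        case hj =>
          intro J hJ
          simp only [Finset.mem_filter, Finset.mem_univ, true_and] at hJ ⊢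
          rw [Finset.card_image_of_injective _ (Equiv.injective _)]
          exact hJ
        case li =>
          intro J _
          ext x
          simp only [Finset.image_image, Finset.mem_image, Function.comp]
          constructor
          · rintro ⟨a, ha, rfl⟩
            rw [Equiv.Perm.inv_def, Equiv.apply_symm_apply]
            exact ha
          · intro hx
            exact ⟨x, hx, by rw [Equiv.Perm.inv_def, Equiv.apply_symm_apply]⟩
        case ri =>
          intro J _
          ext x
          simp only [Finset.image_image, Finset.mem_image, Function.comp]
          constructor
          · rintro ⟨a, ha, rfl⟩
            rw [Equiv.Perm.inv_def, Equiv.symm_apply_apply]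
            exact ha
          · intro hx
            exact ⟨x, hx, by rw [Equiv.Perm.inv_def, Equiv.symm_apply_apply]⟩
        case hcomp =>
          intro J _
          rw [Finset.prod_image (fun x _ y _ h => Equiv.injective σ⁻¹ h)]
          exact (Finset.prod_congr rfl fun j _ => by rw [Equiv.Perm.inv_def, Equiv.apply_symm_apply]).symm
      calc (∑ J ∈ Finset.univ.filter (fun J : Finset (Fin n) => J.card = r),
            (∏ j ∈ J, exp (I * (xi j : ℂ)))
              * (Cfun q (xi ∘ σ) * exp (I * ∑ j : Fin n, (lam j : ℂ) * (xi (σ j) : ℂ))))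
          = (∑ J ∈ Finset.univ.filter (fun J : Finset (Fin n) => J.card = r),
              ∏ j ∈ J, exp (I * (xi j : ℂ)))
              * (Cfun q (xi ∘ σ) * exp (I * ∑ j : Fin n, (lam j : ℂ) * (xi (σ j) : ℂ))) :=
            (Finset.sum_mul _ _ _).symm
        _ = (∑ J ∈ Finset.univ.filter (fun J : Finset (Fin n) => J.card = r),
              ∏ j ∈ J, exp (I * (xi (σ j) : ℂ)))
              * (Cfun q (xi ∘ σ) * exp (I * ∑ j : Fin n, (lam j : ℂ) * (xi (σ j) : ℂ))) := by
            rw [hπ]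
        _ = ∑ J ∈ Finset.univ.filter (fun J : Finset (Fin n) => J.card = r),
              (∏ j ∈ J, exp (I * (xi (σ j) : ℂ)))
              * (Cfun q (xi ∘ σ) * exp (I * ∑ j : Fin n, (lam j : ℂ) * (xi (σ j) : ℂ))) :=
            Finset.sum_mul _ _ _
        _ = ∑ J ∈ Finset.univ.filter (fun J : Finset (Fin n) => J.card = r),
              Cfun q (xi ∘ σ) * exp (I * ∑ j : Fin n, ((indJ lam J) j : ℂ) * (xi (σ j) : ℂ)) :=
            Finset.sum_congr rfl fun J _ => (hg J).symm
    rw [Finset.sum_congr rfl (fun σ _ => perσ σ), Finset.sum_comm]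
    rfl
  rw [step1]
  have step2 : ∀ J ∈ Finset.univ.filter (fun J : Finset (Fin n) => J.card = r),
      hallLittlewood q xi (indJ lam J)
        = (q : ℂ) ^ (Nv lam J) * hallLittlewood q xi (indJ lam (srt lam J)) :=
    fun J _ => straighten_iter q xi hz hlam (Nv lam J) J rfl
  have perK : ∀ K : Finset (Fin n),
      (∑ J ∈ (Finset.univ.filter (fun J : Finset (Fin n) => J.card = r)).filter
          (fun J => srt lam J = K),
        (q : ℂ) ^ (Nv lam J) * hallLittlewood q xi (indJ lam (srt lam J)))
      = if K.card = r ∧ Antitone (indJ lam K) then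
          ((Vcoef q lam K : ℝ) : ℂ) * hallLittlewood q xi (indJ lam K) else 0 := by
    intro K
    rw [Finset.filter_filter]
    by_cases hK : K.card = r ∧ Antitone (indJ lam K)
    · rw [if_pos hK]
      have hdcK : dc lam K := dc_of_adm hlam hK.2
      have h3 : ∀ J ∈ Finset.univ.filter
          (fun J : Finset (Fin n) => J.card = r ∧ srt lam J = K),
          (q : ℂ) ^ (Nv lam J) * hallLittlewood q xi (indJ lam (srt lam J))
            = (q : ℂ) ^ (Nv lam J) * hallLittlewood q xi (indJ lam K) := by
        intro J hJ
        rw [(Finset.mem_filter.mp hJ).2.2]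
      rw [Finset.sum_congr rfl h3, ← Finset.sum_mul]
      congr 1
      rw [← coeff_eval hlam hq hq1 hdcK r hK.1]
      push_cast
      rfl
    · rw [if_neg hK]
      have hempty : Finset.univ.filter
          (fun J : Finset (Fin n) => J.card = r ∧ srt lam J = K) = ∅ := by
        rw [Finset.eq_empty_iff_forall_notMem]
        intro J hJ
        rw [Finset.mem_filter] at hJ
        obtain ⟨-, hcard, hsrt⟩ := hJ
        apply hK
        constructor
        · rw [← hsrt, card_srt, hcard]
        · rw [← hsrt]
          exact (dc_iff_antitone hlam _).mp (dc_srt J)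
      rw [hempty, Finset.sum_empty]
  calc (∑ J ∈ Finset.univ.filter (fun J : Finset (Fin n) => J.card = r),
        hallLittlewood q xi (indJ lam J))
      = ∑ J ∈ Finset.univ.filter (fun J : Finset (Fin n) => J.card = r),
          (q : ℂ) ^ (Nv lam J) * hallLittlewood q xi (indJ lam (srt lam J)) :=
        Finset.sum_congr rfl step2
    _ = ∑ K : Finset (Fin n),
          ∑ J ∈ (Finset.univ.filter (fun J : Finset (Fin n) => J.card = r)).filter
            (fun J => srt lam J = K),
          (q : ℂ) ^ (Nv lam J) * hallLittlewood q xi (indJ lam (srt lam J)) :=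
        (Finset.sum_fiberwise _ _ _).symm
    _ = ∑ K : Finset (Fin n),
          (if K.card = r ∧ Antitone (indJ lam K) then
            ((Vcoef q lam K : ℝ) : ℂ) * hallLittlewood q xi (indJ lam K) else 0) :=
        Finset.sum_congr rfl fun K _ => perK K
    _ = ∑ J : Finset (Fin n),
          (if J.card = r ∧ Antitone (fun k => lam k + if k ∈ J then 1 else 0) then
            ((Vcoef q lam J : ℝ) : ℂ)
              * hallLittlewood q xi (fun k => lam k + if k ∈ J then 1 else 0)
          else 0) := rfl
end
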